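/- arXiv:1501.04894 — 4 statements merged into one kernel-verified Lean document; each statement's English description precedes it below -/
import Mathlib

section
/- Let A be an n×n real matrix with all entries nonnegative. Then the spectral radius c of A (the maximum of |c'| over all complex eigenvalues c' of A) is itself a real eigenvalue of A with c ≥ 0, and A has an eigenvector v ∈ ℝ^n for the eigenvalue c whose components are all nonnegative and not all zero. -/
open Matrix Filter Topology

section PFaux

attribute [local instance] Matrix.linftyOpNormedAddCommGroup Matrix.linftyOpNormedRing
  Matrix.linftyOpNormedAlgebra

variable {n : ℕ}

private lemma pf_entry_le_linfty {𝕜 : Type} [NormedField 𝕜] (M : Matrix (Fin n) (Fin n) 𝕜)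
    (i j : Fin n) : ‖M i j‖ ≤ ‖M‖ := by
  have h1 : ‖M i j‖₊ ≤ ∑ j', ‖M i j'‖₊ :=
    Finset.single_le_sum (f := fun j' => ‖M i j'‖₊) (fun _ _ => zero_le) (Finset.mem_univ j)
  have h2 : (∑ j', ‖M i j'‖₊) ≤ ‖M‖₊ := by
    rw [Matrix.linfty_opNNNorm_def]
    exact Finset.le_sup (f := fun i => ∑ j', ‖M i j'‖₊) (Finset.mem_univ i)
  exact_mod_cast h1.trans h2

private lemma pf_entry_tendsto {𝕜 : Type} [NormedField 𝕜] {f : ℕ → Matrix (Fin n) (Fin n) 𝕜}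
    {L : Matrix (Fin n) (Fin n) 𝕜} (h : Tendsto f atTop (𝓝 L)) (i j : Fin n) :
    Tendsto (fun K => f K i j) atTop (𝓝 (L i j)) := by
  rw [tendsto_iff_norm_sub_tendsto_zero]
  replace h := tendsto_iff_norm_sub_tendsto_zero.1 h
  refine squeeze_zero (fun K => norm_nonneg _) (fun K => ?_) h
  rw [← Matrix.sub_apply]
  exact pf_entry_le_linfty _ i j

private lemma pf_pow_entry_nonneg (A : Matrix (Fin n) (Fin n) ℝ) (hA : ∀ i j, 0 ≤ A i j)
    (k : ℕ) : ∀ i j, 0 ≤ (A ^ k) i j := by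
  induction k with
  | zero =>
    intro i j
    rw [pow_zero]
    by_cases h : i = j <;> simp [Matrix.one_apply, h]
  | succ k ih =>
    intro i j
    rw [pow_succ, Matrix.mul_apply]
    exact Finset.sum_nonneg fun l _ => mul_nonneg (ih i l) (hA l j)

private lemma pf_pow_map (A : Matrix (Fin n) (Fin n) ℝ) (k : ℕ) :
    (A.map Complex.ofReal) ^ k = (A ^ k).map Complex.ofReal := by
  have h : ∀ M : Matrix (Fin n) (Fin n) ℝ, M.map Complex.ofReal
      = Complex.ofRealHom.mapMatrix M := fun M => rfl
  rw [h, h, ← map_pow]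

private lemma pf_geom {𝕜 : Type} [Field 𝕜] (B : Matrix (Fin n) (Fin n) 𝕜) (z : 𝕜)
    (hz : z ≠ 0) (K : ℕ) :
    (z • (1:Matrix (Fin n) (Fin n) 𝕜) - B) * (∑ k ∈ Finset.range K, (z⁻¹)^(k+1) • B ^ k)
      = 1 - (z⁻¹)^K • B ^ K := by
  induction K with
  | zero => simp
  | succ K ih =>
    rw [Finset.sum_range_succ, mul_add, ih]
    rw [sub_mul, smul_mul_assoc, one_mul, mul_smul_comm]
    rw [pow_succ z⁻¹]
    have hzz : z • ((z⁻¹ ^ K * z⁻¹) • B ^ K) = z⁻¹ ^ K • B ^ K := by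
      rw [smul_smul, mul_comm (z⁻¹ ^ K), ← mul_assoc, mul_inv_cancel₀ hz, one_mul]
    rw [hzz, ← pow_succ, ← pow_succ']
    abel

private lemma pf_resolvent_tendsto {𝕜 : Type} [NormedField 𝕜]
    (B : Matrix (Fin n) (Fin n) 𝕜) (z : 𝕜) (hz : z ≠ 0)
    (hU : IsUnit (z • (1:Matrix (Fin n) (Fin n) 𝕜) - B).det)
    (hpow : Tendsto (fun K : ℕ => ‖B ^ K‖ / ‖z‖ ^ K) atTop (𝓝 0)) :
    Tendsto (fun K : ℕ => ∑ k ∈ Finset.range K, (z⁻¹)^(k+1) • B ^ k) atTop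
      (𝓝 (z • (1:Matrix (Fin n) (Fin n) 𝕜) - B)⁻¹) := by
  set M := z • (1:Matrix (Fin n) (Fin n) 𝕜) - B with hM
  set R := M⁻¹ with hR
  have hRM : R * M = 1 := M.nonsing_inv_mul hU
  have key : ∀ K : ℕ, (∑ k ∈ Finset.range K, (z⁻¹)^(k+1) • B ^ k) - R
      = - ((z⁻¹)^K • (R * B ^ K)) := by
    intro K
    have h1 : M * (∑ k ∈ Finset.range K, (z⁻¹)^(k+1) • B ^ k) = 1 - (z⁻¹)^K • B ^ K :=
      pf_geom B z hz K
    have h2 : R * (M * (∑ k ∈ Finset.range K, (z⁻¹)^(k+1) • B ^ k))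
        = R * (1 - (z⁻¹)^K • B ^ K) := by rw [h1]
    rw [← mul_assoc, hRM, one_mul, mul_sub, mul_one, mul_smul_comm] at h2
    rw [h2]; abel
  rw [← tendsto_sub_nhds_zero_iff]
  refine squeeze_zero_norm (f := fun K => (∑ k ∈ Finset.range K, (z⁻¹)^(k+1) • B ^ k) - R)
    (a := fun K => ‖R‖ * (‖B ^ K‖ / ‖z‖ ^ K)) (fun K => ?_) (by simpa using hpow.const_mul ‖R‖)
  · rw [key K, norm_neg, norm_smul, norm_pow, norm_inv]
    have hBK : ‖R * B ^ K‖ ≤ ‖R‖ * ‖B ^ K‖ := norm_mul_le _ _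
    have h1 : (0:ℝ) < ‖z‖ := norm_pos_iff.mpr hz
    have h3 : ‖z‖⁻¹ ^ K * ‖R * B ^ K‖ ≤ ‖z‖⁻¹ ^ K * (‖R‖ * ‖B ^ K‖) :=
      mul_le_mul_of_nonneg_left hBK (pow_nonneg (inv_nonneg.mpr (norm_nonneg z)) K)
    have h4 : ‖z‖⁻¹ ^ K * (‖R‖ * ‖B ^ K‖) = ‖R‖ * (‖B ^ K‖ / ‖z‖ ^ K) := by
      rw [div_eq_mul_inv, ← inv_pow]; ring
    rw [← h4]; exact h3


private lemma pf_norm_map (M : Matrix (Fin n) (Fin n) ℝ) :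
    ‖M.map (Complex.ofReal ·)‖ = ‖M‖ := by
  have : ‖M.map (Complex.ofReal ·)‖₊ = ‖M‖₊ := by
    rw [Matrix.linfty_opNNNorm_def, Matrix.linfty_opNNNorm_def]
    congr 1
    funext i
    congr 1
    funext j
    simp [Matrix.map_apply]
  rw [← coe_nnnorm, ← coe_nnnorm, this]

private lemma pf_pow_div_tendsto (B : Matrix (Fin n) (Fin n) ℂ) (c t : ℝ) (hc : 0 ≤ c)
    (hrad : spectralRadius ℂ B = ENNReal.ofReal c) (ht : c < t) :
    Tendsto (fun K : ℕ => ‖B ^ K‖ / t ^ K) atTop (𝓝 0) := by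
  obtain ⟨t', ht1, ht2⟩ := exists_between ht
  have h0 : (0:ℝ) < t' := lt_of_le_of_lt hc ht1
  have h0t : (0:ℝ) < t := h0.trans ht2
  have hgel := spectrum.pow_nnnorm_pow_one_div_tendsto_nhds_spectralRadius B
  have hev : ∀ᶠ K : ℕ in atTop, (‖B ^ K‖₊ : ENNReal) ^ (1/(K:ℝ)) < ENNReal.ofReal t' := by
    apply hgel.eventually_lt_const
    rw [hrad]
    exact (ENNReal.ofReal_lt_ofReal_iff h0).mpr ht1
  have hev2 : ∀ᶠ K : ℕ in atTop, ‖B ^ K‖ ≤ t' ^ K := by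
    filter_upwards [hev, eventually_ge_atTop 1] with K hK hK1
    have hKne : (K:ℝ) ≠ 0 := by positivity
    have h1 : ((‖B ^ K‖₊ : ENNReal) ^ (1/(K:ℝ))) ^ (K:ℝ) ≤ (ENNReal.ofReal t') ^ (K:ℝ) :=
      ENNReal.rpow_le_rpow hK.le (by positivity)
    rw [← ENNReal.rpow_mul, one_div, inv_mul_cancel₀ hKne, ENNReal.rpow_one] at h1
    have h2 : (ENNReal.ofReal t') ^ (K:ℝ) = ENNReal.ofReal (t' ^ K) := by
      rw [ENNReal.ofReal_rpow_of_pos h0, Real.rpow_natCast]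
    rw [h2, ← ENNReal.ofReal_coe_nnreal, coe_nnnorm] at h1
    exact (ENNReal.ofReal_le_ofReal_iff (by positivity)).mp h1
  apply squeeze_zero' (Eventually.of_forall fun K => by positivity)
    (g := fun K => (t'/t) ^ K)
  · filter_upwards [hev2] with K hK
    rw [div_pow]
    gcongr
  · exact tendsto_pow_atTop_nhds_zero_of_lt_one (by positivity) ((div_lt_one h0t).mpr ht2)


private lemma pf_key (hn : 0 < n) (A : Matrix (Fin n) (Fin n) ℝ) (hA : ∀ i j, 0 ≤ A i j)
    (c : ℝ) (hc : 0 ≤ c) (μ0 : ℂ) (hμ0 : μ0 ∈ spectrum ℂ (A.map Complex.ofReal))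
    (habs : ‖μ0‖ = c)
    (hub : ∀ μ ∈ spectrum ℂ (A.map Complex.ofReal), ‖μ‖ ≤ c)
    (t : ℝ) (ht : c < t) :
    ∃ u : Fin n → ℝ, (∀ i, 0 ≤ u i) ∧ 1/(t - c) ≤ ‖u‖ ∧
      t • u - A.mulVec u = (fun _ => 1) := by
  classical
  set B := A.map Complex.ofReal with hBdef
  have ht0 : 0 < t := hc.trans_lt ht
  -- spectral radius is c
  have hrad : spectralRadius ℂ B = ENNReal.ofReal c := by
    apply le_antisymm
    · rw [spectralRadius]
      apply iSup₂_le
      intro μ hμ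
      rw [← ENNReal.ofReal_coe_nnreal, coe_nnnorm]
      exact ENNReal.ofReal_le_ofReal (hub μ hμ)
    · rw [spectralRadius]
      have h1 : ENNReal.ofReal c = (‖μ0‖₊ : ENNReal) := by
        rw [← ENNReal.ofReal_coe_nnreal, coe_nnnorm, habs]
      rw [h1]
      exact le_iSup₂ (f := fun μ (_ : μ ∈ spectrum ℂ B) => (‖μ‖₊ : ENNReal)) μ0 hμ0
  -- invertibility over ℂ outside radius
  have hunit : ∀ z : ℂ, c < ‖z‖ →
      IsUnit (z • (1:Matrix (Fin n) (Fin n) ℂ) - B).det := by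
    intro z hz
    by_contra h
    have hmem : z ∈ spectrum ℂ B := by
      rw [spectrum.mem_iff, Algebra.algebraMap_eq_smul_one]
      exact fun hu => h ((Matrix.isUnit_iff_isUnit_det _).mp hu)
    exact absurd (hub z hmem) (not_le.mpr hz)
  -- complexification of t•1 - A
  have hmap : ((t • (1:Matrix (Fin n) (Fin n) ℝ) - A).map Complex.ofReal)
      = (t:ℂ) • (1:Matrix (Fin n) (Fin n) ℂ) - B := by
    ext i j
    by_cases h : i = j <;>
      simp [hBdef, Matrix.map_apply, Matrix.sub_apply, Matrix.smul_apply, Matrix.one_apply, h,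
        smul_eq_mul]
  have htabs : c < ‖((t:ℝ):ℂ)‖ := by
    rwa [Complex.norm_real, Real.norm_eq_abs, abs_of_pos ht0]
  have hunitC : IsUnit (((t:ℝ):ℂ) • (1:Matrix (Fin n) (Fin n) ℂ) - B).det := hunit _ htabs
  have hunitR : IsUnit (t • (1:Matrix (Fin n) (Fin n) ℝ) - A).det := by
    rw [isUnit_iff_ne_zero]
    intro h0
    have hdet : ((t • (1:Matrix (Fin n) (Fin n) ℝ) - A).map Complex.ofReal).det
        = Complex.ofReal ((t • (1:Matrix (Fin n) (Fin n) ℝ) - A).det) := by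
      exact (RingHom.map_det Complex.ofRealHom _).symm
    have hz : (((t:ℝ):ℂ) • (1:Matrix (Fin n) (Fin n) ℂ) - B).det = 0 := by
      rw [← hmap, hdet, h0, Complex.ofReal_zero]
    rw [hz] at hunitC
    simp at hunitC
  -- choose ω
  obtain ⟨ω, hω1, hωμ⟩ : ∃ ω : ℂ, ‖ω‖ = 1 ∧ (c:ℂ) * ω = μ0 := by
    by_cases hc0 : c = 0
    · refine ⟨1, by simp, ?_⟩
      have : μ0 = 0 := by
        have := habs; rw [hc0] at this
        exact norm_eq_zero.mp this
      simp [this, hc0]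
    · refine ⟨μ0 / c, ?_, ?_⟩
      · rw [norm_div, habs, Complex.norm_real, Real.norm_eq_abs, abs_of_nonneg hc, div_self hc0]
      · rw [mul_comm]; exact div_mul_cancel₀ μ0 (Complex.ofReal_ne_zero.mpr hc0)
  set z : ℂ := (t:ℂ) * ω with hzdef
  have hzabs : ‖z‖ = t := by
    rw [hzdef, norm_mul, Complex.norm_real, Real.norm_eq_abs, hω1, abs_of_pos ht0, mul_one]
  have hz0 : z ≠ 0 := by
    intro h
    rw [h] at hzabs
    simp at hzabs
    exact absurd hzabs.symm ht0.ne'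
  have hunitz : IsUnit (z • (1:Matrix (Fin n) (Fin n) ℂ) - B).det :=
    hunit z (by rw [hzabs]; exact ht)
  -- power decay
  have hpowC : Tendsto (fun K : ℕ => ‖B ^ K‖ / ‖z‖ ^ K) atTop (𝓝 0) := by
    have : ‖z‖ = t := by rw [hzabs]
    rw [this]
    exact pf_pow_div_tendsto B c t hc hrad ht
  have hpowR : Tendsto (fun K : ℕ => ‖A ^ K‖ / ‖(t:ℝ)‖ ^ K) atTop (𝓝 0) := by
    have h1 : ∀ K : ℕ, ‖A ^ K‖ = ‖B ^ K‖ := by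
      intro K
      rw [hBdef, pf_pow_map, pf_norm_map]
    have h2 : ‖(t:ℝ)‖ = t := by rw [Real.norm_eq_abs, abs_of_pos ht0]
    simp only [h1, h2]
    exact pf_pow_div_tendsto B c t hc hrad ht
  -- resolvents
  set Rt : Matrix (Fin n) (Fin n) ℝ := (t • (1:Matrix (Fin n) (Fin n) ℝ) - A)⁻¹ with hRtdef
  set Rz : Matrix (Fin n) (Fin n) ℂ := (z • (1:Matrix (Fin n) (Fin n) ℂ) - B)⁻¹ with hRzdef
  have hSt := pf_resolvent_tendsto A (t:ℝ) (ne_of_gt ht0) hunitR hpowR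
  have hSz := pf_resolvent_tendsto B z hz0 hunitz hpowC
  have htc : (0:ℝ) < t - c := sub_pos.mpr ht
  -- entrywise limits, real
  have hEntryR : ∀ i j, Tendsto
      (fun K : ℕ => ∑ k ∈ Finset.range K, (t⁻¹)^(k+1) * (A^k) i j) atTop (𝓝 (Rt i j)) := by
    intro i j
    have h := pf_entry_tendsto hSt i j
    simpa [Matrix.sum_apply, Matrix.smul_apply, smul_eq_mul] using h
  -- Rt entries are nonnegative
  have hRtnn : ∀ i j, 0 ≤ Rt i j := by
    intro i j
    refine ge_of_tendsto' (hEntryR i j) (fun K => ?_)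
    refine Finset.sum_nonneg fun k _ => mul_nonneg (by positivity) (pf_pow_entry_nonneg A hA k i j)
  -- complex entries dominated by real ones
  have hdom : ∀ i j, ‖(Rz i j)‖ ≤ Rt i j := by
    intro i j
    have h1 := pf_entry_tendsto hSz i j
    have h2 : Tendsto
        (fun K : ℕ => ‖(∑ k ∈ Finset.range K, (z⁻¹)^(k+1) • B^k) i j‖)
        atTop (𝓝 (‖(Rz i j)‖)) := (continuous_norm.tendsto _).comp h1
    refine le_of_tendsto_of_tendsto' h2 (hEntryR i j) (fun K => ?_)
    rw [Matrix.sum_apply]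
    refine (norm_sum_le _ _).trans (Finset.sum_le_sum fun k _ => ?_)
    rw [Matrix.smul_apply, smul_eq_mul, norm_mul, norm_pow, norm_inv, hzabs]
    have hBk : (B ^ k) i j = Complex.ofReal ((A ^ k) i j) := by
      rw [hBdef, pf_pow_map]; rfl
    rw [hBk, Complex.norm_real, Real.norm_eq_abs, abs_of_nonneg (pf_pow_entry_nonneg A hA k i j)]
  -- norm of Rz is at least 1/(t-c)
  have hnormRz : 1/(t - c) ≤ ‖Rz‖ := by
    rw [div_le_iff₀ htc]
    by_contra hlt
    push_neg at hlt
    have hUz : IsUnit (z • (1:Matrix (Fin n) (Fin n) ℂ) - B) :=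
      (Matrix.isUnit_iff_isUnit_det _).mpr hunitz
    have hmul : (z • (1:Matrix (Fin n) (Fin n) ℂ) - B) * Rz = 1 :=
      Matrix.mul_nonsing_inv _ hunitz
    have hfactor : μ0 • (1:Matrix (Fin n) (Fin n) ℂ) - B
        = (z • (1:Matrix (Fin n) (Fin n) ℂ) - B) * (1 - ((z - μ0) • Rz)) := by
      rw [mul_sub, mul_one, mul_smul_comm, hmul, sub_smul]
      module
    have hzμ : ‖z - μ0‖ = t - c := by
      have he : z - μ0 = ((t - c : ℝ) : ℂ) * ω := by
        rw [hzdef, ← hωμ]; push_cast; ring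
      rw [he, norm_mul, Complex.norm_real, Real.norm_eq_abs, hω1, mul_one, abs_of_pos htc]
    have hsmall : ‖(z - μ0) • Rz‖ < 1 := by
      rw [norm_smul, hzμ]
      calc (t - c) * ‖Rz‖ = ‖Rz‖ * (t - c) := mul_comm _ _
        _ < 1 := hlt
    have hu2 : IsUnit ((1:Matrix (Fin n) (Fin n) ℂ) - (z - μ0) • Rz) :=
      (Units.oneSub _ hsmall).isUnit
    have hcontra : IsUnit (μ0 • (1:Matrix (Fin n) (Fin n) ℂ) - B) := by
      rw [hfactor]; exact hUz.mul hu2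
    rw [spectrum.mem_iff, Algebra.algebraMap_eq_smul_one] at hμ0
    exact hμ0 hcontra
  -- pick the row attaining the sup norm of Rz
  have : Nonempty (Fin n) := Fin.pos_iff_nonempty.mp hn
  obtain ⟨i, -, hi⟩ := Finset.exists_mem_eq_sup (Finset.univ : Finset (Fin n))
    Finset.univ_nonempty (fun i => ∑ j, ‖Rz i j‖₊)
  have hnormRz_eq : ‖Rz‖ = ∑ j, ‖(Rz i j)‖ := by
    rw [← coe_nnnorm, Matrix.linfty_opNNNorm_def, hi]
    push_cast
    simp
  -- the candidate vector
  refine ⟨Rt.mulVec (fun _ => 1), fun i' => ?_, ?_, ?_⟩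
  · simp only [Matrix.mulVec, dotProduct]
    exact Finset.sum_nonneg fun j _ => by simpa using hRtnn i' j
  · have h1 : Rt.mulVec (fun _ => 1) i = ∑ j, Rt i j := by
      simp [Matrix.mulVec, dotProduct]
    have h2 : ∑ j, ‖(Rz i j)‖ ≤ ∑ j, Rt i j :=
      Finset.sum_le_sum fun j _ => hdom i j
    have h3 : Rt.mulVec (fun _ => 1) i ≤ ‖Rt.mulVec (fun _ => 1)‖ := by
      refine le_trans (le_abs_self _) ?_
      rw [← Real.norm_eq_abs]
      exact norm_le_pi_norm _ i
    calc 1/(t-c) ≤ ‖Rz‖ := hnormRz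
      _ = ∑ j, ‖(Rz i j)‖ := hnormRz_eq
      _ ≤ ∑ j, Rt i j := h2
      _ = Rt.mulVec (fun _ => 1) i := h1.symm
      _ ≤ ‖Rt.mulVec (fun _ => 1)‖ := h3
  · have hmulR : (t • (1:Matrix (Fin n) (Fin n) ℝ) - A) * Rt = 1 :=
      Matrix.mul_nonsing_inv _ hunitR
    have h4 : (t • (1:Matrix (Fin n) (Fin n) ℝ) - A).mulVec (Rt.mulVec (fun _ => 1))
        = (fun _ => 1) := by
      rw [Matrix.mulVec_mulVec, hmulR, Matrix.one_mulVec]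
    rw [Matrix.sub_mulVec, Matrix.smul_mulVec, Matrix.one_mulVec] at h4
    exact h4


/-- Perron–Frobenius (existence part): for a nonnegative square matrix `A`, the
spectral radius (the maximum of `|c'|` over the complex eigenvalues `c'` of `A`)
is itself a real eigenvalue of `A`, is nonnegative, and admits an entrywise
nonnegative nonzero eigenvector. -/
theorem perron_frobenius_nonneg
    (n : ℕ) (hn : 0 < n)
    (A : Matrix (Fin n) (Fin n) ℝ)
    (hA : ∀ i j, 0 ≤ A i j) :
    ∃ c : ℝ,
      IsGreatest {r : ℝ | ∃ μ : ℂ,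
        μ ∈ spectrum ℂ (A.map Complex.ofReal) ∧ r = ‖μ‖} c ∧
      0 ≤ c ∧
      c ∈ spectrum ℝ A ∧
      ∃ v : Fin n → ℝ, (∀ i, 0 ≤ v i) ∧ v ≠ 0 ∧ A.mulVec v = c • v := by
  classical
  have hNe : NeZero n := ⟨hn.ne'⟩
  set B := A.map Complex.ofReal with hBdef
  -- spectrum is finite and nonempty
  have hfin : (spectrum ℂ B).Finite := B.finite_spectrum
  have hne : (spectrum ℂ B).Nonempty := by
    rw [← AlgEquiv.spectrum_eq (Matrix.toLinAlgEquiv (Pi.basisFun ℂ (Fin n)))]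
    exact spectrum.nonempty_of_isAlgClosed_of_finiteDimensional ℂ _
  -- the set of absolute values of eigenvalues
  have hSeq : {r : ℝ | ∃ μ : ℂ, μ ∈ spectrum ℂ B ∧ r = ‖μ‖}
      = norm '' spectrum ℂ B := by
    ext r
    simp [Set.mem_image, eq_comm]
  obtain ⟨c, hcgreat⟩ := ((hfin.image norm).isCompact).exists_isGreatest
    (hne.image norm)
  obtain ⟨μ0, hμ0, habs⟩ := hcgreat.1
  have hub : ∀ μ ∈ spectrum ℂ B, ‖μ‖ ≤ c := fun μ hμ =>
    hcgreat.2 (Set.mem_image_of_mem _ hμ)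
  have hc0 : 0 ≤ c := habs ▸ norm_nonneg μ0
  -- the approximating sequence
  have key := fun k : ℕ => pf_key hn A hA c hc0 μ0 hμ0 habs hub (c + (k+1:ℝ)⁻¹)
    (by simp [lt_add_iff_pos_right]; positivity)
  choose u hu0 hunorm huid using key
  -- properties of the sequence
  have hνpos : ∀ k : ℕ, (0:ℝ) < ‖u k‖ := by
    intro k
    refine lt_of_lt_of_le ?_ (hunorm k)
    rw [add_sub_cancel_left]
    positivity
  have hune : ∀ k : ℕ, u k ≠ 0 := fun k => norm_pos_iff.mp (hνpos k)
  have hularge : ∀ k : ℕ, (k+1:ℝ) ≤ ‖u k‖ := by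
    intro k
    refine le_trans ?_ (hunorm k)
    rw [add_sub_cancel_left, one_div, inv_inv]
  set w : ℕ → (Fin n → ℝ) := fun k => ‖u k‖⁻¹ • u k with hwdef
  have hwnorm : ∀ k, ‖w k‖ = 1 := by
    intro k
    rw [hwdef]
    simp only [norm_smul, norm_inv, norm_norm]
    rw [inv_mul_cancel₀ (hνpos k).ne']
  have hw0 : ∀ k i, 0 ≤ w k i := by
    intro k i
    rw [hwdef]
    simp only [Pi.smul_apply, smul_eq_mul]
    exact mul_nonneg (by positivity) (hu0 k i)
  -- the compact set
  set Kset : Set (Fin n → ℝ) := {x | ‖x‖ ≤ 1 ∧ ∀ i, 0 ≤ x i} with hKdef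
  have hKcl : IsClosed Kset := by
    have h1 : Kset = {x : Fin n → ℝ | ‖x‖ ≤ 1} ∩ ⋂ i, {x : Fin n → ℝ | 0 ≤ x i} := by
      ext x
      simp [hKdef, Set.mem_iInter]
    rw [h1]
    exact (isClosed_le continuous_norm continuous_const).inter
      (isClosed_iInter fun i => isClosed_le continuous_const (continuous_apply i))
  have hKsub : Kset ⊆ Metric.closedBall 0 1 := by
    intro x hx
    rw [Metric.mem_closedBall, dist_zero_right]
    exact hx.1
  have hKcomp : IsCompact Kset :=
    (isCompact_closedBall (0 : Fin n → ℝ) 1).of_isClosed_subset hKcl hKsub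
  have hwmem : ∀ k, w k ∈ Kset := fun k => ⟨(hwnorm k).le, hw0 k⟩
  obtain ⟨v, hvK, φ, hφ, hconv⟩ := hKcomp.tendsto_subseq hwmem
  -- limit identities
  have hAw : ∀ k : ℕ, A.mulVec (w k)
      = (c + (k+1:ℝ)⁻¹) • w k - ‖u k‖⁻¹ • (fun _ => (1:ℝ)) := by
    intro k
    have h1 := huid k
    have h2 : A.mulVec (u k) = (c + (k+1:ℝ)⁻¹) • u k - (fun _ => (1:ℝ)) := by
      rw [← h1]; abel
    rw [hwdef]
    simp only [Matrix.mulVec_smul, h2]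
    rw [smul_sub, smul_comm]
  -- tendsto of A.mulVec (w (φ k)) to A.mulVec v
  have hcontmul : Continuous (fun x : Fin n → ℝ => A.mulVec x) := by
    have : (fun x : Fin n → ℝ => A.mulVec x) = A.mulVecLin := by
      ext x i; rfl
    rw [this]
    exact A.mulVecLin.continuous_of_finiteDimensional
  have hlim1 : Tendsto (fun k => A.mulVec (w (φ k))) atTop (𝓝 (A.mulVec v)) :=
    ((hcontmul.tendsto v).comp hconv)
  -- tendsto of the right-hand side to c • v
  have htendt : Tendsto (fun k : ℕ => c + (k+1:ℝ)⁻¹) atTop (𝓝 c) := by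
    have := tendsto_one_div_add_atTop_nhds_zero_nat (𝕜 := ℝ)
    have h2 : Tendsto (fun k : ℕ => (k+1:ℝ)⁻¹) atTop (𝓝 0) := by
      simpa [one_div] using this
    simpa using tendsto_const_nhds.add h2
  have htendtφ : Tendsto (fun k : ℕ => c + (φ k+1:ℝ)⁻¹) atTop (𝓝 c) :=
    htendt.comp (hφ.tendsto_atTop)
  have hνtend : Tendsto (fun k : ℕ => ‖u (φ k)‖⁻¹) atTop (𝓝 0) := by
    refine squeeze_zero (g := fun k : ℕ => ((φ k : ℝ)+1)⁻¹) (fun k => by positivity)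
      (fun k => ?_) ?_
    · exact inv_anti₀ (by positivity) (hularge (φ k))
    · have h2 : Tendsto (fun k : ℕ => ((φ k : ℝ)+1)⁻¹) atTop (𝓝 0) := by
        have h3 : Tendsto (fun k : ℕ => ((k:ℝ)+1)⁻¹) atTop (𝓝 0) := by
          simpa [one_div] using tendsto_one_div_add_atTop_nhds_zero_nat (𝕜 := ℝ)
        exact h3.comp (hφ.tendsto_atTop)
      exact h2
  have hlim2 : Tendsto (fun k => A.mulVec (w (φ k))) atTop (𝓝 (c • v)) := by
    have h1 : Tendsto (fun k => (c + (φ k+1:ℝ)⁻¹) • w (φ k)) atTop (𝓝 (c • v)) :=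
      htendtφ.smul hconv
    have h2 : Tendsto (fun k => ‖u (φ k)‖⁻¹ • (fun _ => (1:ℝ) : Fin n → ℝ)) atTop
        (𝓝 (0 : Fin n → ℝ)) := by
      have := hνtend.smul_const (fun _ => (1:ℝ) : Fin n → ℝ)
      simpa using this
    have h3 := h1.sub h2
    rw [sub_zero] at h3
    refine h3.congr fun k => ?_
    rw [hAw (φ k)]
  have hAv : A.mulVec v = c • v := tendsto_nhds_unique hlim1 hlim2
  -- v has norm 1
  have hvnorm : ‖v‖ = 1 := by
    have h1 : Tendsto (fun k => ‖w (φ k)‖) atTop (𝓝 ‖v‖) :=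
      (continuous_norm.tendsto v).comp hconv
    have h2 : Tendsto (fun k : ℕ => (1:ℝ)) atTop (𝓝 1) := tendsto_const_nhds
    have h3 : (fun k => ‖w (φ k)‖) = fun _ : ℕ => (1:ℝ) := funext fun k => hwnorm (φ k)
    rw [h3] at h1
    exact tendsto_nhds_unique h1 h2
  have hvne : v ≠ 0 := by
    intro h
    rw [h, norm_zero] at hvnorm
    exact zero_ne_one hvnorm
  -- c is in the real spectrum
  have hcspec : c ∈ spectrum ℝ A := by
    rw [spectrum.mem_iff, Algebra.algebraMap_eq_smul_one]
    intro hUnit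
    have hdet : IsUnit (c • (1:Matrix (Fin n) (Fin n) ℝ) - A).det :=
      (Matrix.isUnit_iff_isUnit_det _).mp hUnit
    have h1 : (c • (1:Matrix (Fin n) (Fin n) ℝ) - A).mulVec v = 0 := by
      rw [Matrix.sub_mulVec, Matrix.smul_mulVec, Matrix.one_mulVec, hAv, sub_self]
    have h2 : ((c • (1:Matrix (Fin n) (Fin n) ℝ) - A)⁻¹ *
        (c • (1:Matrix (Fin n) (Fin n) ℝ) - A)).mulVec v = v := by
      rw [Matrix.nonsing_inv_mul _ hdet, Matrix.one_mulVec]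
    rw [← Matrix.mulVec_mulVec, h1, Matrix.mulVec_zero] at h2
    exact hvne h2.symm
  exact ⟨c, hSeq ▸ hcgreat, hc0, hcspec, v, hvK.2, hvne, hAv⟩


end PFaux
end

section
/- Let A be an n×n real matrix with all entries nonnegative that is primitive, i.e., there exists k ≥ 1 such that every entry of Aᵏ is strictly positive, and let c be its dominant eigenvalue (the real eigenvalue with c > |c'| for all other eigenvalues c'). Then there is an eigenvector v ∈ ℝ^n for c whose components are all strictly positive, and v is unique up to multiplication by a nonzero scalar: any eigenvector of A for the eigenvalue c is a scalar multiple of v. -/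
open Matrix Polynomial Finset

section PerronAux

variable {n : ℕ}

private lemma my_eval_charpoly {K : Type*} [Field K] (B : Matrix (Fin n) (Fin n) K) (μ : K) :
    B.charpoly.eval μ = (algebraMap K (Matrix (Fin n) (Fin n) K) μ - B).det := by
  rw [Matrix.charpoly, ← Polynomial.coe_evalRingHom, RingHom.map_det]
  congr 1
  ext i j
  by_cases h : i = j <;>
    simp [charmatrix_apply, Matrix.map_apply, h, Matrix.algebraMap_matrix_apply,
      Matrix.diagonal_apply, Matrix.one_apply]

private lemma my_mem_spectrum_iff_det {K : Type*} [Field K] (B : Matrix (Fin n) (Fin n) K)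
    (μ : K) :
    μ ∈ spectrum K B ↔ (algebraMap K (Matrix (Fin n) (Fin n) K) μ - B).det = 0 := by
  rw [spectrum.mem_iff]
  constructor
  · intro h
    by_contra hd
    exact h ((Matrix.isUnit_iff_isUnit_det _).mpr (isUnit_iff_ne_zero.mpr hd))
  · intro h hu
    exact isUnit_iff_ne_zero.mp ((Matrix.isUnit_iff_isUnit_det _).mp hu) h

private lemma my_root_mem_spectrum {K : Type*} [Field K] {B : Matrix (Fin n) (Fin n) K} {μ : K}
    (h : μ ∈ B.charpoly.roots) : μ ∈ spectrum K B := by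
  rw [my_mem_spectrum_iff_det, ← my_eval_charpoly]
  exact Polynomial.isRoot_of_mem_roots h

private lemma my_map_pow (A : Matrix (Fin n) (Fin n) ℝ) (N : ℕ) :
    (A ^ N).map Complex.ofReal = (A.map Complex.ofReal) ^ N := by
  have h : ∀ B : Matrix (Fin n) (Fin n) ℝ, B.map Complex.ofReal =
      Complex.ofRealHom.mapMatrix B := fun B => rfl
  rw [h, h, map_pow]

private lemma my_trace_map (A : Matrix (Fin n) (Fin n) ℝ) :
    Matrix.trace (A.map Complex.ofReal) = ((Matrix.trace A : ℝ) : ℂ) := by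
  simp [Matrix.trace, Matrix.map_apply, Matrix.diag]

private lemma my_card_roots (B : Matrix (Fin n) (Fin n) ℂ) :
    Multiset.card B.charpoly.roots = n := by
  have hs := IsAlgClosed.splits B.charpoly
  rw [Polynomial.splits_iff_card_roots.mp hs, Matrix.charpoly_natDegree_eq_dim,
    Fintype.card_fin]

private lemma my_trace_pow_le (A : Matrix (Fin n) (Fin n) ℝ) {b : ℝ}
    (hspec : ∀ μ ∈ spectrum ℂ (A.map Complex.ofReal), ‖μ‖ ≤ b)
    {N : ℕ} (hN : 1 ≤ N) : Matrix.trace (A ^ N) ≤ n * b ^ N := by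
  set M := A.map Complex.ofReal with hM
  have hspecN : ∀ μ' ∈ spectrum ℂ (M ^ N), ‖μ'‖ ≤ b ^ N := by
    intro μ' hμ'
    rw [spectrum.map_pow_of_pos M (Nat.lt_of_lt_of_le Nat.zero_lt_one hN)] at hμ'
    obtain ⟨μ, hμ, rfl⟩ := hμ'
    rw [norm_pow]
    exact pow_le_pow_left₀ (norm_nonneg μ) (hspec μ hμ) N
  have h1 : ‖Matrix.trace (M ^ N)‖ ≤ n * b ^ N := by
    rw [Matrix.trace_eq_sum_roots_charpoly]
    calc ‖(M ^ N).charpoly.roots.sum‖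
        ≤ ((M ^ N).charpoly.roots.map (fun z => ‖z‖)).sum := by
          simpa using
            norm_multiset_sum_le ((M ^ N).charpoly.roots)
      _ ≤ Multiset.card ((M ^ N).charpoly.roots.map (fun z => ‖z‖)) • (b ^ N) := by
          apply Multiset.sum_le_card_nsmul
          intro x hx
          obtain ⟨μ', hμ', rfl⟩ := Multiset.mem_map.mp hx
          exact hspecN μ' (my_root_mem_spectrum hμ')
      _ = n * b ^ N := by
          rw [Multiset.card_map, my_card_roots, nsmul_eq_mul]
  have h2 : Matrix.trace (M ^ N) = ((Matrix.trace (A ^ N) : ℝ) : ℂ) := by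
    rw [hM, ← my_map_pow, my_trace_map]
  rw [h2, Complex.norm_real, Real.norm_eq_abs] at h1
  exact (le_abs_self _).trans h1

private lemma my_pow_entry_nonneg {A : Matrix (Fin n) (Fin n) ℝ} (hA : ∀ i j, 0 ≤ A i j)
    (m : ℕ) : ∀ i j, 0 ≤ (A ^ m) i j := by
  induction m with
  | zero => intro i j; by_cases h : i = j <;> simp [Matrix.one_apply, h]
  | succ m ih =>
    intro i j
    rw [pow_succ, Matrix.mul_apply]
    exact Finset.sum_nonneg fun l _ => mul_nonneg (ih i l) (hA l j)

private lemma my_mulVec_apply (A : Matrix (Fin n) (Fin n) ℝ) (v : Fin n → ℝ) (i : Fin n) :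
    A.mulVec v i = ∑ j, A i j * v j := rfl

private lemma my_iter_ge {A : Matrix (Fin n) (Fin n) ℝ} (hA : ∀ i j, 0 ≤ A i j)
    {r : ℝ} (hr : 0 ≤ r) {y : Fin n → ℝ}
    (h : ∀ i, r * y i ≤ A.mulVec y i) (m : ℕ) :
    ∀ i, r ^ m * y i ≤ (A ^ m).mulVec y i := by
  induction m with
  | zero => intro i; simp [Matrix.mulVec_one]
  | succ m ih =>
    intro i
    have hstep : (A ^ (m + 1)).mulVec y i = A.mulVec ((A ^ m).mulVec y) i := by
      rw [pow_succ', ← Matrix.mulVec_mulVec]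
    rw [hstep]
    have h1 : ∑ j, A i j * (r ^ m * y j) ≤ ∑ j, A i j * ((A ^ m).mulVec y j) :=
      Finset.sum_le_sum fun j _ => mul_le_mul_of_nonneg_left (ih j) (hA i j)
    have h2 : r ^ m * (r * y i) ≤ r ^ m * A.mulVec y i :=
      mul_le_mul_of_nonneg_left (h i) (pow_nonneg hr m)
    calc r ^ (m + 1) * y i = r ^ m * (r * y i) := by ring
      _ ≤ r ^ m * A.mulVec y i := h2
      _ = ∑ j, A i j * (r ^ m * y j) := by
          rw [my_mulVec_apply]; rw [Finset.mul_sum]; congr 1; ext j; ring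
      _ ≤ ∑ j, A i j * ((A ^ m).mulVec y j) := h1
      _ = A.mulVec ((A ^ m).mulVec y) i := (my_mulVec_apply ..).symm

private lemma my_no_supereigen (hn : 0 < n) {A : Matrix (Fin n) (Fin n) ℝ}
    (hA : ∀ i j, 0 ≤ A i j) {k : ℕ} (hk : 1 ≤ k)
    (hkpos : ∀ i j, 0 < (A ^ k) i j) {c : ℝ} (hc0 : 0 < c)
    (hspec : ∀ μ ∈ spectrum ℂ (A.map Complex.ofReal), ‖μ‖ ≤ c)
    {y : Fin n → ℝ} (hy : ∀ i, 0 < y i) {ε : ℝ} (hε : 0 < ε)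
    (hAy : ∀ i, (c + ε) * y i ≤ A.mulVec y i) : False := by
  haveI : Nonempty (Fin n) := ⟨⟨0, hn⟩⟩
  set i₁ : Fin n := ⟨0, hn⟩
  obtain ⟨jY, -, hjY⟩ := Finset.exists_max_image (Finset.univ : Finset (Fin n)) y ⟨i₁, mem_univ _⟩
  set Y := y jY with hYdef
  have hY : 0 < Y := hy jY
  set δ : ℝ := Finset.univ.inf' univ_nonempty (fun i : Fin n × Fin n => (A ^ k) i.1 i.2)
    with hδdef
  have hδ : 0 < δ := by
    rw [hδdef, Finset.lt_inf'_iff]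
    exact fun i _ => hkpos i.1 i.2
  have hδle : ∀ i j, δ ≤ (A ^ k) i j := fun i j =>
    Finset.inf'_le _ (Finset.mem_univ (i, j))
  set D : ℝ := δ * δ * y i₁ / (n * Y) with hDdef
  have hD : 0 < D := by
    apply div_pos (mul_pos (mul_pos hδ hδ) (hy i₁)) (mul_pos (by exact_mod_cast hn) hY)
  have key : ∀ m : ℕ, D * (c + ε) ^ m ≤ Matrix.trace (A ^ (k + m + k)) := by
    intro m
    have hiter := my_iter_ge hA (by positivity) hAy m i₁
    have hexists : ∃ j₀ : Fin n, (c + ε) ^ m * y i₁ / n ≤ (A ^ m) i₁ j₀ * y j₀ := by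
      by_contra hcon
      push_neg at hcon
      have hsum : ∑ j, (A ^ m) i₁ j * y j < ∑ _j : Fin n, (c + ε) ^ m * y i₁ / n :=
        Finset.sum_lt_sum_of_nonempty univ_nonempty fun j _ => hcon j
      rw [Finset.sum_const, Finset.card_univ, Fintype.card_fin, nsmul_eq_mul,
        mul_div_cancel₀ _ (by exact_mod_cast hn.ne' : (n : ℝ) ≠ 0)] at hsum
      rw [my_mulVec_apply] at hiter
      linarith
    obtain ⟨j₀, hj₀⟩ := hexists
    have hAm : (c + ε) ^ m * y i₁ / (n * Y) ≤ (A ^ m) i₁ j₀ := by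
      rw [div_le_iff₀ (mul_pos (by exact_mod_cast hn) hY)]
      calc (c + ε) ^ m * y i₁ = ((c + ε) ^ m * y i₁ / n) * n := by
            field_simp
        _ ≤ ((A ^ m) i₁ j₀ * y j₀) * n := by
            apply mul_le_mul_of_nonneg_right hj₀ (by positivity)
        _ ≤ ((A ^ m) i₁ j₀ * Y) * n := by
            apply mul_le_mul_of_nonneg_right _ (by positivity)
            exact mul_le_mul_of_nonneg_left (hjY j₀ (mem_univ _))
              (my_pow_entry_nonneg hA m i₁ j₀)
        _ = (A ^ m) i₁ j₀ * (n * Y) := by ring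
    have htr : δ * ((A ^ m) i₁ j₀) * δ ≤ Matrix.trace (A ^ (k + m + k)) := by
      have hdecomp : A ^ (k + m + k) = A ^ k * A ^ m * A ^ k := by
        rw [← pow_add, ← pow_add]
      have hdiag : (A ^ k) i₁ i₁ * (A ^ m) i₁ j₀ * (A ^ k) j₀ i₁ ≤ (A ^ (k + m + k)) i₁ i₁ := by
        rw [hdecomp, Matrix.mul_apply]
        calc (A ^ k) i₁ i₁ * (A ^ m) i₁ j₀ * (A ^ k) j₀ i₁
            ≤ (A ^ k * A ^ m) i₁ j₀ * (A ^ k) j₀ i₁ := by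
              apply mul_le_mul_of_nonneg_right _ (my_pow_entry_nonneg hA k j₀ i₁)
              rw [Matrix.mul_apply]
              exact Finset.single_le_sum
                (f := fun l => (A ^ k) i₁ l * (A ^ m) l j₀)
                (fun l _ => mul_nonneg (my_pow_entry_nonneg hA k i₁ l)
                  (my_pow_entry_nonneg hA m l j₀)) (mem_univ i₁)
          _ ≤ ∑ l, (A ^ k * A ^ m) i₁ l * (A ^ k) l i₁ :=
              Finset.single_le_sum
                (f := fun l => (A ^ k * A ^ m) i₁ l * (A ^ k) l i₁)
                (fun l _ => mul_nonneg
                  (by rw [← pow_add]; exact my_pow_entry_nonneg hA (k + m) i₁ l)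
                  (my_pow_entry_nonneg hA k l i₁)) (mem_univ j₀)
      have htrge : (A ^ (k + m + k)) i₁ i₁ ≤ Matrix.trace (A ^ (k + m + k)) :=
        Finset.single_le_sum
          (f := fun i => (A ^ (k + m + k)) i i)
          (fun i _ => my_pow_entry_nonneg hA (k + m + k) i i) (mem_univ i₁)
      refine le_trans ?_ (le_trans hdiag htrge)
      calc δ * ((A ^ m) i₁ j₀) * δ
          ≤ (A ^ k) i₁ i₁ * ((A ^ m) i₁ j₀) * δ := by
            apply mul_le_mul_of_nonneg_right
              (mul_le_mul_of_nonneg_right (hδle i₁ i₁) (my_pow_entry_nonneg hA m i₁ j₀)) hδ.le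
        _ ≤ (A ^ k) i₁ i₁ * ((A ^ m) i₁ j₀) * (A ^ k) j₀ i₁ := by
            apply mul_le_mul_of_nonneg_left (hδle j₀ i₁)
            exact mul_nonneg (my_pow_entry_nonneg hA k i₁ i₁) (my_pow_entry_nonneg hA m i₁ j₀)
    refine le_trans ?_ htr
    rw [hDdef]
    calc δ * δ * y i₁ / (n * Y) * (c + ε) ^ m
        = δ * ((c + ε) ^ m * y i₁ / (n * Y)) * δ := by ring
      _ ≤ δ * ((A ^ m) i₁ j₀) * δ := by
          apply mul_le_mul_of_nonneg_right (mul_le_mul_of_nonneg_left hAm hδ.le) hδ.le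
  have hub : ∀ m : ℕ, D * (c + ε) ^ m ≤ n * c ^ (2 * k) * c ^ m := by
    intro m
    have hle := my_trace_pow_le A hspec (N := k + m + k) (le_trans hk (by omega))
    refine (key m).trans (le_trans hle ?_)
    have hpow : c ^ (k + m + k) = c ^ (2 * k) * c ^ m := by
      rw [← pow_add]; ring_nf
    rw [hpow, ← mul_assoc]
  obtain ⟨m, hm⟩ := pow_unbounded_of_one_lt (n * c ^ (2 * k) / D)
    (by rw [lt_div_iff₀ hc0, one_mul]; linarith : (1 : ℝ) < (c + ε) / c)
  have hfinal : n * c ^ (2 * k) * c ^ m < D * (c + ε) ^ m := by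
    have h1 : n * c ^ (2 * k) / D < ((c + ε) / c) ^ m := hm
    have h2 : n * c ^ (2 * k) < D * ((c + ε) / c) ^ m := by
      rw [div_lt_iff₀ hD] at h1; linarith [h1]
    have h3 := mul_lt_mul_of_pos_right h2 (pow_pos hc0 m)
    calc n * c ^ (2 * k) * c ^ m < D * ((c + ε) / c) ^ m * c ^ m := h3
      _ = D * (c + ε) ^ m := by
          rw [div_pow, mul_assoc, div_mul_cancel₀]
          exact (pow_pos hc0 m).ne'
  exact absurd (hub m) (not_le.mpr hfinal)

private lemma my_mulVec_pos {B : Matrix (Fin n) (Fin n) ℝ} (hB : ∀ i j, 0 < B i j)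
    {v : Fin n → ℝ} (hv : ∀ i, 0 ≤ v i) {j₀ : Fin n} (hj₀ : 0 < v j₀) (i : Fin n) :
    0 < B.mulVec v i := by
  rw [my_mulVec_apply]
  have h1 : 0 < B i j₀ * v j₀ := mul_pos (hB i j₀) hj₀
  have h2 : ∀ j ∈ Finset.univ, (0:ℝ) ≤ B i j * v j :=
    fun j _ => mul_nonneg (hB i j).le (hv j)
  calc (0:ℝ) < B i j₀ * v j₀ := h1
    _ ≤ ∑ j, B i j * v j := Finset.single_le_sum h2 (mem_univ j₀)

private lemma my_pow_eig {A : Matrix (Fin n) (Fin n) ℝ} {c : ℝ} {v : Fin n → ℝ}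
    (h : A.mulVec v = c • v) (m : ℕ) : (A ^ m).mulVec v = c ^ m • v := by
  induction m with
  | zero => simp [Matrix.one_mulVec]
  | succ m ih =>
    rw [pow_succ', ← Matrix.mulVec_mulVec, ih, Matrix.mulVec_smul, h, pow_succ, smul_smul,
      mul_comm]

private lemma my_abs_eigen (hn : 0 < n) {A : Matrix (Fin n) (Fin n) ℝ}
    (hA : ∀ i j, 0 ≤ A i j) {k : ℕ} (hk : 1 ≤ k)
    (hkpos : ∀ i j, 0 < (A ^ k) i j) {c : ℝ} (hc0 : 0 < c)
    (hspec : ∀ μ ∈ spectrum ℂ (A.map Complex.ofReal), ‖μ‖ ≤ c)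
    {w : Fin n → ℝ} (hw : w ≠ 0) (heig : A.mulVec w = c • w) :
    (∀ i, 0 < |w i|) ∧ A.mulVec (fun i => |w i|) = c • (fun i => |w i|) := by
  haveI : Nonempty (Fin n) := ⟨⟨0, hn⟩⟩
  set aw : Fin n → ℝ := fun i => |w i| with haw
  have hawnn : ∀ i, 0 ≤ aw i := fun i => abs_nonneg _
  obtain ⟨j₀, hj₀⟩ := Function.ne_iff.mp hw
  have hj₀' : 0 < aw j₀ := abs_pos.mpr hj₀
  have hz : ∀ i, c * aw i ≤ A.mulVec aw i := by
    intro i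
    have h1 : c * aw i = |c * w i| := by
      rw [abs_mul, abs_of_pos hc0]
    have h2 : c * w i = A.mulVec w i := by rw [heig]; simp
    rw [h1, h2, my_mulVec_apply]
    calc |∑ j, A i j * w j| ≤ ∑ j, |A i j * w j| := Finset.abs_sum_le_sum_abs _ _
      _ = ∑ j, A i j * aw j := by
          apply Finset.sum_congr rfl
          intro j _
          rw [abs_mul, abs_of_nonneg (hA i j)]
      _ = A.mulVec aw i := (my_mulVec_apply ..).symm
  have heq : A.mulVec aw = c • aw := by
    by_contra hne
    set z : Fin n → ℝ := fun i => A.mulVec aw i - c * aw i with hzdef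
    have hznn : ∀ i, 0 ≤ z i := fun i => sub_nonneg.mpr (hz i)
    have hzex : ∃ i, 0 < z i := by
      by_contra hcon
      push_neg at hcon
      apply hne
      funext i
      have h0 : z i = 0 := le_antisymm (hcon i) (hznn i)
      have h0' := sub_eq_zero.mp h0
      simp only [Pi.smul_apply, smul_eq_mul]
      linarith [h0']
    obtain ⟨i₂, hi₂⟩ := hzex
    set y : Fin n → ℝ := (A ^ k).mulVec aw with hydef
    have hy : ∀ i, 0 < y i := my_mulVec_pos hkpos hawnn hj₀'
    set q : Fin n → ℝ := (A ^ k).mulVec z with hqdef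
    have hq : ∀ i, 0 < q i := my_mulVec_pos hkpos hznn hi₂
    have hAyq : A.mulVec y = fun i => c * y i + q i := by
      have h1 : A.mulVec y = (A ^ k).mulVec (A.mulVec aw) := by
        rw [hydef, Matrix.mulVec_mulVec, Matrix.mulVec_mulVec, ← pow_succ', ← pow_succ]
      have h2 : A.mulVec aw = fun i => c * aw i + z i := by
        funext i; rw [hzdef]; ring
      rw [h1, h2]
      have h3 : (fun i => c * aw i + z i) = c • aw + z := by
        funext i; simp
      rw [h3, Matrix.mulVec_add, Matrix.mulVec_smul]
      funext i
      simp [hydef, hqdef]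
    set ε : ℝ := Finset.univ.inf' univ_nonempty (fun i => q i / y i) with hεdef
    have hε : 0 < ε := by
      rw [hεdef, Finset.lt_inf'_iff]
      exact fun i _ => div_pos (hq i) (hy i)
    have hAy : ∀ i, (c + ε) * y i ≤ A.mulVec y i := by
      intro i
      have h1 : ε ≤ q i / y i := Finset.inf'_le _ (mem_univ i)
      have h2 : ε * y i ≤ q i := by
        rw [← div_mul_cancel₀ (q i) (hy i).ne']
        exact mul_le_mul_of_nonneg_right h1 (hy i).le
      rw [hAyq]
      ring_nf
      nlinarith [h2]
    exact my_no_supereigen hn hA hk hkpos hc0 hspec hy hε hAy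
  have hpos : ∀ i, 0 < aw i := by
    intro i
    have h1 : (A ^ k).mulVec aw = c ^ k • aw := my_pow_eig heq k
    have h2 : 0 < (A ^ k).mulVec aw i := my_mulVec_pos hkpos hawnn hj₀' i
    rw [h1] at h2
    simp only [Pi.smul_apply, smul_eq_mul] at h2
    nlinarith [pow_pos hc0 k, h2, hawnn i]
  exact ⟨hpos, heq⟩

private lemma my_spec_complex {A : Matrix (Fin n) (Fin n) ℝ} {c : ℝ} (hc : c ∈ spectrum ℝ A) :
    (c : ℂ) ∈ spectrum ℂ (A.map Complex.ofReal) := by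
  rw [my_mem_spectrum_iff_det] at hc ⊢
  have hmap : (algebraMap ℂ (Matrix (Fin n) (Fin n) ℂ) (c : ℂ) - A.map Complex.ofReal)
      = (algebraMap ℝ (Matrix (Fin n) (Fin n) ℝ) c - A).map Complex.ofRealHom := by
    ext i j
    by_cases h : i = j <;>
      simp [Matrix.algebraMap_matrix_apply, Matrix.map_apply, Matrix.sub_apply, h]
  rw [hmap, ← RingHom.mapMatrix_apply, ← RingHom.map_det, hc, map_zero]

private lemma my_c_pos (hn : 0 < n) {A : Matrix (Fin n) (Fin n) ℝ}
    (hA : ∀ i j, 0 ≤ A i j) {k : ℕ} (hk : 1 ≤ k)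
    (hkpos : ∀ i j, 0 < (A ^ k) i j) {c : ℝ}
    (hdom : ∀ μ : ℂ, μ ∈ spectrum ℂ (A.map Complex.ofReal) → μ ≠ (c : ℂ) →
      ‖μ‖ < c) : 0 < c := by
  haveI : Nonempty (Fin n) := ⟨⟨0, hn⟩⟩
  by_contra hcon
  push_neg at hcon
  set M := A.map Complex.ofReal with hM
  have hsub : spectrum ℂ M ⊆ {(c : ℂ)} := by
    intro μ hμ
    by_cases h : μ = (c : ℂ)
    · exact h
    · exact absurd ((norm_nonneg μ).trans_lt (hdom μ hμ h)) (not_lt.mpr hcon)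
  have htr : ∀ N : ℕ, 1 ≤ N → Matrix.trace (A ^ N) = n * c ^ N := by
    intro N hN
    have hroots : ∀ x ∈ (M ^ N).charpoly.roots, x = ((c : ℂ)) ^ N := by
      intro x hx
      have hxs : x ∈ spectrum ℂ (M ^ N) := my_root_mem_spectrum hx
      rw [spectrum.map_pow_of_pos M (Nat.lt_of_lt_of_le Nat.zero_lt_one hN)] at hxs
      obtain ⟨μ, hμ, rfl⟩ := hxs
      rw [hsub hμ]
    have hsum : (M ^ N).charpoly.roots.sum = (n : ℂ) * (c : ℂ) ^ N := by
      rw [Multiset.eq_replicate_card.mpr hroots, Multiset.sum_replicate, my_card_roots,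
        nsmul_eq_mul]
    have h2 : Matrix.trace (M ^ N) = ((Matrix.trace (A ^ N) : ℝ) : ℂ) := by
      rw [hM, ← my_map_pow, my_trace_map]
    rw [Matrix.trace_eq_sum_roots_charpoly, hsum] at h2
    have h3 : (((n : ℝ) * c ^ N : ℝ) : ℂ) = ((Matrix.trace (A ^ N) : ℝ) : ℂ) := by
      rw [← h2]; push_cast; ring
    exact_mod_cast h3.symm
  have hrow : ∀ i, ∃ l, 0 < A i l := by
    intro i
    by_contra hcon2
    push_neg at hcon2
    have hzero : ∀ l, A i l = 0 := fun l => le_antisymm (hcon2 l) (hA i l)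
    have hzz : (A ^ k) i i = 0 := by
      have hdecomp : A ^ k = A * A ^ (k - 1) := by
        rw [← pow_succ']
        congr 1
        omega
      rw [hdecomp, Matrix.mul_apply]
      apply Finset.sum_eq_zero
      intro l _
      rw [hzero l, zero_mul]
    exact absurd hzz (hkpos i i).ne'
  have htrk : 0 < Matrix.trace (A ^ k) :=
    Finset.sum_pos (fun i _ => hkpos i i) univ_nonempty
  have htrk1 : 0 < Matrix.trace (A ^ (k + 1)) := by
    apply Finset.sum_pos _ univ_nonempty
    intro i _
    obtain ⟨l, hl⟩ := hrow i
    have hdiag : (A ^ (k + 1)) i i = ∑ j, A i j * (A ^ k) j i := by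
      rw [pow_succ', Matrix.mul_apply]
    show (0:ℝ) < (A ^ (k + 1)) i i
    rw [hdiag]
    calc (0:ℝ) < A i l * (A ^ k) l i := mul_pos hl (hkpos l i)
      _ ≤ ∑ j, A i j * (A ^ k) j i :=
        Finset.single_le_sum (fun j _ => mul_nonneg (hA i j) (hkpos j i).le) (mem_univ l)
  rw [htr k hk] at htrk
  rw [htr (k + 1) (by omega)] at htrk1
  have hn' : (0:ℝ) < n := by exact_mod_cast hn
  have hck : 0 < c ^ k := by
    by_contra h
    push_neg at h
    nlinarith [mul_nonneg hn'.le (neg_nonneg.mpr h)]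
  rw [pow_succ] at htrk1
  nlinarith [mul_nonneg (mul_nonneg hn'.le hck.le) (neg_nonneg.mpr hcon)]

end PerronAux

/-- Perron–Frobenius for primitive matrices (eigenvector part): if `c` is the
dominant eigenvalue of a nonnegative primitive matrix `A`, then there is an
entrywise strictly positive eigenvector `v` for `c`, and any eigenvector of `A`
for the eigenvalue `c` is a scalar multiple of `v`. -/
theorem perron_frobenius_primitive_positive_eigenvector
    (n : ℕ)
    (A : Matrix (Fin n) (Fin n) ℝ)
    (hA : ∀ i j, 0 ≤ A i j)
    (hprim : ∃ k : ℕ, 1 ≤ k ∧ ∀ i j, 0 < (A ^ k) i j)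
    (c : ℝ)
    (hc : c ∈ spectrum ℝ A)
    (hdom : ∀ μ : ℂ, μ ∈ spectrum ℂ (A.map Complex.ofReal) → μ ≠ (c : ℂ) →
      ‖μ‖ < c) :
    ∃ v : Fin n → ℝ, (∀ i, 0 < v i) ∧ A.mulVec v = c • v ∧
      ∀ u : Fin n → ℝ, u ≠ 0 → A.mulVec u = c • u →
        ∃ α : ℝ, α ≠ 0 ∧ u = α • v := by
  obtain ⟨k, hk, hkpos⟩ := hprim
  have hn : 0 < n := by
    by_contra hn0
    push_neg at hn0
    interval_cases n
    exact (spectrum.mem_iff.mp hc) (isUnit_of_subsingleton _)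
  have hc0 : 0 < c := my_c_pos hn hA hk hkpos hdom
  have hspec : ∀ μ ∈ spectrum ℂ (A.map Complex.ofReal), ‖μ‖ ≤ c := by
    intro μ hμ
    by_cases h : μ = (c : ℂ)
    · rw [h, Complex.norm_real, Real.norm_eq_abs, abs_of_pos hc0]
    · exact (hdom μ hμ h).le
  -- get a real eigenvector
  have hdet : (algebraMap ℝ (Matrix (Fin n) (Fin n) ℝ) c - A).det = 0 :=
    (my_mem_spectrum_iff_det A c).mp hc
  obtain ⟨w, hw0, hw⟩ := (Matrix.exists_mulVec_eq_zero_iff).mpr hdet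
  have heigw : A.mulVec w = c • w := by
    rw [Matrix.sub_mulVec, Algebra.algebraMap_eq_smul_one, Matrix.smul_mulVec,
      Matrix.one_mulVec, sub_eq_zero] at hw
    exact hw.symm
  obtain ⟨hvpos, hveig⟩ := my_abs_eigen hn hA hk hkpos hc0 hspec hw0 heigw
  set v : Fin n → ℝ := fun i => |w i| with hv
  refine ⟨v, hvpos, hveig, ?_⟩
  intro u hu0 hueig
  obtain ⟨hupos, -⟩ := my_abs_eigen hn hA hk hkpos hc0 hspec hu0 hueig
  set i₀ : Fin n := ⟨0, hn⟩
  set α : ℝ := u i₀ / v i₀ with hα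
  have hαne : α ≠ 0 := div_ne_zero (fun h => by simpa [h] using hupos i₀) (hvpos i₀).ne'
  refine ⟨α, hαne, ?_⟩
  by_contra hne
  set d : Fin n → ℝ := u - α • v with hd
  have hd0 : d ≠ 0 := fun h => hne (by
    have := sub_eq_zero.mp (by rw [← hd]; exact h)
    exact this)
  have hdeig : A.mulVec d = c • d := by
    rw [hd, Matrix.mulVec_sub, Matrix.mulVec_smul, hueig, hveig]
    funext i
    simp
    ring
  obtain ⟨hdpos, -⟩ := my_abs_eigen hn hA hk hkpos hc0 hspec hd0 hdeig
  have hdi₀ : d i₀ = 0 := by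
    simp only [hd, Pi.sub_apply, Pi.smul_apply, smul_eq_mul, hα]
    rw [div_mul_cancel₀ _ (hvpos i₀).ne', sub_self]
  simpa [hdi₀] using hdpos i₀
end

section
/- Let A be an n×n real matrix with all entries nonnegative that is primitive, i.e., there exists k ≥ 1 such that every entry of Aᵏ is strictly positive, and suppose its dominant eigenvalue equals 1, with v ∈ ℝ^n an entrywise positive eigenvector for the eigenvalue 1. Then for any starting vector x⁽⁰⁾ ∈ ℝ^n with nonnegative components, x⁽⁰⁾ ≠ 0, the sequence Aᵏ x⁽⁰⁾ converges as k → ∞ to a vector in the direction of v, i.e., there exists a real scalar α > 0 with lim_{k→∞} Aᵏ x⁽⁰⁾ = α v. -/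
open Matrix Filter

attribute [local instance] Matrix.linftyOpNormedAddCommGroup Matrix.linftyOpNormedRing
  Matrix.linftyOpNormedSpace Matrix.linftyOpNormedAlgebra

section Aux

private lemma pf_pow_mul_P {n : ℕ} {A P : Matrix (Fin n) (Fin n) ℝ} (hAP : A * P = P) :
    ∀ m : ℕ, A ^ m * P = P := by
  intro m
  induction m with
  | zero => simp
  | succ m ih => rw [pow_succ, mul_assoc, hAP, ih]

private lemma pf_B_pow {n : ℕ} {A P : Matrix (Fin n) (Fin n) ℝ} (hAP : A * P = P)
    (hPA : P * A = P) (hPP : P * P = P) : ∀ m : ℕ, 1 ≤ m → (A - P) ^ m = A ^ m - P := by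
  intro m hm
  induction m with
  | zero => omega
  | succ m ih =>
    rcases Nat.eq_zero_or_pos m with h0 | h1
    · subst h0; simp
    · rw [pow_succ, ih h1, sub_mul, mul_sub, mul_sub, pf_pow_mul_P hAP m, hPA, hPP,
        sub_self, sub_zero, ← pow_succ]

private lemma pf_tendsto_pow_norm_zero {n : ℕ} [NeZero n] (B : Matrix (Fin n) (Fin n) ℂ)
    (h : spectralRadius ℂ B < 1) :
    Tendsto (fun m : ℕ => ‖B ^ m‖) atTop (nhds 0) := by
  haveI : CompleteSpace (Matrix (Fin n) (Fin n) ℂ) :=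
    FiniteDimensional.complete ℂ (Matrix (Fin n) (Fin n) ℂ)
  have hgel := spectrum.pow_nnnorm_pow_one_div_tendsto_nhds_spectralRadius B
  obtain ⟨r, hr1, hr2⟩ := exists_between h
  have hev : ∀ᶠ m : ℕ in atTop, (‖B ^ m‖₊ : ENNReal) ^ (1 / (m:ℝ)) < r :=
    hgel.eventually_lt_const hr1
  have hub : ∀ᶠ m : ℕ in atTop, (‖B ^ m‖₊ : ENNReal) ≤ r ^ m := by
    filter_upwards [hev, eventually_ge_atTop 1] with m hm hm1
    have hm0 : (m : ℝ) ≠ 0 := by positivity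
    have h1 : ((‖B ^ m‖₊ : ENNReal) ^ (1 / (m:ℝ))) ^ (m:ℝ) ≤ r ^ (m:ℝ) :=
      ENNReal.rpow_le_rpow hm.le (by positivity)
    rw [← ENNReal.rpow_mul, one_div, inv_mul_cancel₀ hm0, ENNReal.rpow_one,
      ENNReal.rpow_natCast r m] at h1
    exact h1
  have htend0 : Tendsto (fun m : ℕ => (‖B ^ m‖₊ : ENNReal)) atTop (nhds 0) :=
    tendsto_of_tendsto_of_tendsto_of_le_of_le'
      (tendsto_const_nhds) (ENNReal.tendsto_pow_atTop_nhds_zero_of_lt_one hr2)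
      (Eventually.of_forall fun m => zero_le) hub
  have htend1 : Tendsto (fun m : ℕ => ‖B ^ m‖₊) atTop (nhds (0 : NNReal)) := by
    rw [← ENNReal.coe_zero] at htend0
    exact (ENNReal.tendsto_coe).mp htend0
  have h2 : Tendsto (fun m : ℕ => (‖B ^ m‖₊ : ℝ)) atTop (nhds ((0 : NNReal) : ℝ)) :=
    NNReal.tendsto_coe.mpr htend1
  simpa [coe_nnnorm] using h2

end Aux
private lemma pf_pow_mulVec_fixed {n : ℕ} {R : Type*} [CommRing R] {A : Matrix (Fin n) (Fin n) R}
    {z : Fin n → R} (hz : A *ᵥ z = z) (m : ℕ) : (A ^ m) *ᵥ z = z := by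
  induction m with
  | zero => simp
  | succ m ih => rw [pow_succ, ← Matrix.mulVec_mulVec, hz, ih]

private lemma pf_eig_one_unique {n : ℕ} (hn : 0 < n) {A : Matrix (Fin n) (Fin n) ℝ} {k : ℕ}
    (hk : ∀ i j, 0 < (A ^ k) i j) {v : Fin n → ℝ} (hv : ∀ i, 0 < v i)
    (hAv : A *ᵥ v = v) {y : Fin n → ℝ} (hy : A *ᵥ y = y) : ∃ t : ℝ, y = t • v := by
  haveI : Nonempty (Fin n) := ⟨⟨0, hn⟩⟩
  obtain ⟨i₀, -, hi₀⟩ := Finset.exists_min_image Finset.univ (fun i => y i / v i)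
    Finset.univ_nonempty
  set t : ℝ := y i₀ / v i₀ with ht
  refine ⟨t, ?_⟩
  set z : Fin n → ℝ := y - t • v with hzdef
  have hz : ∀ i, 0 ≤ z i := by
    intro i
    have h1 : t ≤ y i / v i := hi₀ i (Finset.mem_univ i)
    simp only [hzdef, Pi.sub_apply, Pi.smul_apply, smul_eq_mul]
    nlinarith [(le_div_iff₀ (hv i)).mp h1]
  have hz0 : z i₀ = 0 := by
    simp only [hzdef, Pi.sub_apply, Pi.smul_apply, smul_eq_mul, ht]
    rw [div_mul_eq_mul_div, mul_div_assoc, div_self (hv i₀).ne', mul_one, sub_self]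
  have hAz : A *ᵥ z = z := by
    simp only [hzdef]
    rw [Matrix.mulVec_sub, hy, Matrix.mulVec_smul, hAv]
  by_cases hzz : z = 0
  · rwa [hzdef, sub_eq_zero] at hzz
  · exfalso
    obtain ⟨j₀, hj₀⟩ := Function.ne_iff.mp hzz
    have hj₀' : 0 < z j₀ := lt_of_le_of_ne (hz j₀) (Ne.symm hj₀)
    have h2 : (A ^ k) *ᵥ z = z := pf_pow_mulVec_fixed hAz k
    have h3 : 0 < ((A ^ k) *ᵥ z) i₀ := by
      rw [Matrix.mulVec, dotProduct]
      apply Finset.sum_pos'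
      · exact fun j _ => mul_nonneg (hk i₀ j).le (hz j)
      · exact ⟨j₀, Finset.mem_univ j₀, mul_pos (hk i₀ j₀) hj₀'⟩
    rw [h2, hz0] at h3
    exact lt_irrefl 0 h3

/-- Every complex eigenvalue of `A - P` has modulus `< 1`. -/
private lemma pf_spec_bound {n : ℕ} (hn : 0 < n) {A : Matrix (Fin n) (Fin n) ℝ} {k : ℕ}
    (hk : ∀ i j, 0 < (A ^ k) i j)
    (hdom : ∀ μ : ℂ, μ ∈ spectrum ℂ (A.map Complex.ofReal) → μ ≠ 1 → ‖μ‖ < 1)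
    {v w : Fin n → ℝ} (hv : ∀ i, 0 < v i) (hw : ∀ i, 0 < w i)
    (hAv : A *ᵥ v = v) (hwA : w ᵥ* A = w) {c : ℝ} (hc : c = w ⬝ᵥ v) (hc0 : 0 < c)
    {P : Matrix (Fin n) (Fin n) ℝ} (hP : P = c⁻¹ • vecMulVec v w) :
    ∀ μ : ℂ, μ ∈ spectrum ℂ ((A - P).map Complex.ofReal) → ‖μ‖₊ < 1 := by
  intro μ hμ
  by_cases hμ0 : μ = 0
  · simp [hμ0]
  -- extract an eigenvector
  have hdet : (algebraMap ℂ (Matrix (Fin n) (Fin n) ℂ) μ - (A - P).map Complex.ofReal).det = 0 := by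
    have h1 := spectrum.mem_iff.mp hμ
    by_contra h
    exact h1 ((Matrix.isUnit_iff_isUnit_det _).mpr (isUnit_iff_ne_zero.mpr h))
  obtain ⟨u, hu0, huz⟩ := (Matrix.exists_mulVec_eq_zero_iff).mpr hdet
  have hBu : ((A - P).map Complex.ofReal) *ᵥ u = μ • u := by
    have h2 : algebraMap ℂ (Matrix (Fin n) (Fin n) ℂ) μ *ᵥ u
        - ((A - P).map Complex.ofReal) *ᵥ u = 0 := by
      rw [← Matrix.sub_mulVec]; exact huz
    have h3 : algebraMap ℂ (Matrix (Fin n) (Fin n) ℂ) μ *ᵥ u = μ • u := by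
      rw [Algebra.algebraMap_eq_smul_one, Matrix.smul_mulVec, Matrix.one_mulVec]
    rw [h3] at h2
    exact (sub_eq_zero.mp h2).symm
  set Bc := (A - P).map Complex.ofReal with hBc
  set wc : Fin n → ℂ := fun i => (w i : ℂ) with hwc
  have hcsum : ∑ i, w i * v i = c := by rw [hc]; rfl
  -- w kills B := A - P from the left
  have hwB : ∀ j, ∑ i, w i * (A - P) i j = 0 := by
    intro j
    have hwAj : ∑ i, w i * A i j = w j := by
      have h4 := congrFun hwA j
      simpa [Matrix.vecMul, dotProduct] using h4
    have hwPj : ∑ i, w i * P i j = w j := by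
      have h5 : ∀ i, w i * P i j = (w i * v i) * (c⁻¹ * w j) := by
        intro i
        rw [hP]
        simp only [Matrix.smul_apply, Matrix.vecMulVec_apply, smul_eq_mul]
        ring
      rw [Finset.sum_congr rfl (fun i _ => h5 i), ← Finset.sum_mul, hcsum,
        ← mul_assoc, mul_inv_cancel₀ hc0.ne', one_mul]
    simp only [Matrix.sub_apply, mul_sub, Finset.sum_sub_distrib, hwAj, hwPj, sub_self]
  have hwBc : wc ᵥ* Bc = 0 := by
    funext j
    show ∑ i, wc i * Bc i j = 0
    have h6 : ∀ i, wc i * Bc i j = (((w i * (A - P) i j : ℝ)) : ℂ) := by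
      intro i
      simp only [hwc, hBc, Matrix.map_apply]
      push_cast
      ring
    rw [Finset.sum_congr rfl (fun i _ => h6 i), ← Complex.ofReal_sum, hwB j,
      Complex.ofReal_zero]
  have h6' : wc ⬝ᵥ (Bc *ᵥ u) = μ * (wc ⬝ᵥ u) := by
    rw [hBu, dotProduct_smul, smul_eq_mul]
  have h7 : wc ⬝ᵥ (Bc *ᵥ u) = 0 := by
    rw [Matrix.dotProduct_mulVec, hwBc, zero_dotProduct]
  have hwu : wc ⬝ᵥ u = 0 := by
    have h8 : μ * (wc ⬝ᵥ u) = 0 := h6'.symm.trans h7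
    exact (mul_eq_zero.mp h8).resolve_left hμ0
  have hwusum : ∑ j, (w j : ℂ) * u j = 0 := hwu
  have hPu : (P.map Complex.ofReal) *ᵥ u = 0 := by
    funext i
    show ∑ j, ((P i j : ℝ) : ℂ) * u j = 0
    have h9 : ∀ j, ((P i j : ℝ) : ℂ) * u j = ((c⁻¹ * v i : ℝ) : ℂ) * ((w j : ℂ) * u j) := by
      intro j
      rw [hP]
      simp only [Matrix.smul_apply, Matrix.vecMulVec_apply, smul_eq_mul]
      push_cast
      ring
    rw [Finset.sum_congr rfl (fun j _ => h9 j), ← Finset.mul_sum, hwusum, mul_zero]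
  have hAu : (A.map Complex.ofReal) *ᵥ u = μ • u := by
    have hABP : A.map Complex.ofReal = Bc + P.map Complex.ofReal := by
      ext i j
      simp only [hBc, Matrix.map_apply, Matrix.add_apply, Matrix.sub_apply]
      push_cast
      ring
    rw [hABP, Matrix.add_mulVec, hBu, hPu, add_zero]
  have hμA : μ ∈ spectrum ℂ (A.map Complex.ofReal) := by
    rw [spectrum.mem_iff]
    intro hunit
    have hdetA : (algebraMap ℂ (Matrix (Fin n) (Fin n) ℂ) μ - A.map Complex.ofReal).det = 0 := by
      apply Matrix.exists_mulVec_eq_zero_iff.mp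
      refine ⟨u, hu0, ?_⟩
      rw [Matrix.sub_mulVec, hAu, Algebra.algebraMap_eq_smul_one, Matrix.smul_mulVec,
        Matrix.one_mulVec, sub_self]
    exact (isUnit_iff_ne_zero.mp ((Matrix.isUnit_iff_isUnit_det _).mp hunit)) hdetA
  by_cases hμ1 : μ = 1
  · exfalso
    subst hμ1
    have hAu1 : (A.map Complex.ofReal) *ᵥ u = u := by rw [hAu, one_smul]
    set ur : Fin n → ℝ := fun i => (u i).re with hurdef
    set ui : Fin n → ℝ := fun i => (u i).im with huidef
    have hre_apply : ∀ i, ((A.map Complex.ofReal *ᵥ u) i).re = (A *ᵥ ur) i := by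
      intro i
      show ((∑ j, ((A i j : ℝ) : ℂ) * u j).re) = ∑ j, A i j * (u j).re
      rw [Complex.re_sum]
      exact Finset.sum_congr rfl fun j _ => Complex.re_ofReal_mul _ _
    have him_apply : ∀ i, ((A.map Complex.ofReal *ᵥ u) i).im = (A *ᵥ ui) i := by
      intro i
      show ((∑ j, ((A i j : ℝ) : ℂ) * u j).im) = ∑ j, A i j * (u j).im
      rw [Complex.im_sum]
      exact Finset.sum_congr rfl fun j _ => Complex.im_ofReal_mul _ _
    have hur : A *ᵥ ur = ur := by
      funext i
      rw [← hre_apply i, congrFun hAu1 i]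
    have hui : A *ᵥ ui = ui := by
      funext i
      rw [← him_apply i, congrFun hAu1 i]
    obtain ⟨s, hs⟩ := pf_eig_one_unique hn hk hv hAv hur
    obtain ⟨t, htt⟩ := pf_eig_one_unique hn hk hv hAv hui
    have hre0 : ∑ i, w i * (u i).re = 0 := by
      have h10 := congrArg Complex.re hwusum
      rw [Complex.re_sum] at h10
      simpa [Complex.re_ofReal_mul] using h10
    have him0 : ∑ i, w i * (u i).im = 0 := by
      have h10 := congrArg Complex.im hwusum
      rw [Complex.im_sum] at h10
      simpa [Complex.im_ofReal_mul] using h10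
    have hs0 : s = 0 := by
      have h11 : ∑ i, w i * ur i = s * c := by
        rw [hs, ← hcsum, Finset.mul_sum]
        exact Finset.sum_congr rfl fun i _ => by simp [Pi.smul_apply]; ring
      have h12 : s * c = 0 := by rw [← h11]; exact hre0
      exact (mul_eq_zero.mp h12).resolve_right hc0.ne'
    have ht0 : t = 0 := by
      have h11 : ∑ i, w i * ui i = t * c := by
        rw [htt, ← hcsum, Finset.mul_sum]
        exact Finset.sum_congr rfl fun i _ => by simp [Pi.smul_apply]; ring
      have h12 : t * c = 0 := by rw [← h11]; exact him0
      exact (mul_eq_zero.mp h12).resolve_right hc0.ne'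
    apply hu0
    funext i
    apply Complex.ext
    · show (u i).re = (0 : ℂ).re
      have : ur i = 0 := by rw [hs, hs0]; simp
      simpa [hurdef] using this
    · show (u i).im = (0 : ℂ).im
      have : ui i = 0 := by rw [htt, ht0]; simp
      simpa [huidef] using this
  · have h13 := hdom μ hμA hμ1
    have h14 : ‖μ‖ < 1 := h13
    exact_mod_cast h14
private lemma pf_exists_pos_left_eigvec {n : ℕ} {A : Matrix (Fin n) (Fin n) ℝ}
    (hA : ∀ i j, 0 ≤ A i j) {k : ℕ} (hk : ∀ i j, 0 < (A ^ k) i j)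
    (hone : (1 : ℝ) ∈ spectrum ℝ A)
    {v : Fin n → ℝ} (hv : ∀ i, 0 < v i) (hAv : A *ᵥ v = v) :
    ∃ w : Fin n → ℝ, (∀ i, 0 < w i) ∧ w ᵥ* A = w := by
  have hdet : ((1 : Matrix (Fin n) (Fin n) ℝ) - A).det = 0 := by
    have h1 : ¬ IsUnit ((1 : Matrix (Fin n) (Fin n) ℝ) - A) := by
      have := spectrum.mem_iff.mp hone
      rwa [_root_.map_one] at this
    by_contra h
    exact h1 ((Matrix.isUnit_iff_isUnit_det _).mpr (isUnit_iff_ne_zero.mpr h))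
  have hdetT : ((1 : Matrix (Fin n) (Fin n) ℝ) - Aᵀ).det = 0 := by
    have h2 : (1 : Matrix (Fin n) (Fin n) ℝ) - Aᵀ = ((1 : Matrix (Fin n) (Fin n) ℝ) - A)ᵀ := by
      rw [Matrix.transpose_sub, Matrix.transpose_one]
    rw [h2, Matrix.det_transpose, hdet]
  obtain ⟨u, hu0, huz⟩ := (Matrix.exists_mulVec_eq_zero_iff).mpr hdetT
  have hATu : Aᵀ *ᵥ u = u := by
    have h3 : (1 : Matrix (Fin n) (Fin n) ℝ) *ᵥ u - Aᵀ *ᵥ u = 0 := by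
      rw [← Matrix.sub_mulVec]; exact huz
    rw [Matrix.one_mulVec] at h3
    exact (sub_eq_zero.mp h3).symm
  set w : Fin n → ℝ := fun i => |u i| with hw
  have hwnn : ∀ i, 0 ≤ w i := fun i => abs_nonneg _
  have hle : ∀ i, w i ≤ (Aᵀ *ᵥ w) i := by
    intro i
    have h4 : w i = |(Aᵀ *ᵥ u) i| := by rw [hATu]
    rw [h4]
    calc |(Aᵀ *ᵥ u) i| = |∑ j, Aᵀ i j * u j| := rfl
      _ ≤ ∑ j, |Aᵀ i j * u j| := Finset.abs_sum_le_sum_abs _ _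
      _ = ∑ j, Aᵀ i j * |u j| := by
          refine Finset.sum_congr rfl fun j _ => ?_
          rw [abs_mul, abs_of_nonneg (show (0:ℝ) ≤ Aᵀ i j from hA j i)]
      _ = (Aᵀ *ᵥ w) i := rfl
  have hdot : v ⬝ᵥ (Aᵀ *ᵥ w) = v ⬝ᵥ w := by
    rw [Matrix.dotProduct_mulVec, Matrix.vecMul_transpose, hAv]
  have heq : Aᵀ *ᵥ w = w := by
    have hsum : ∑ i, v i * ((Aᵀ *ᵥ w) i - w i) = 0 := by
      have : ∑ i, v i * ((Aᵀ *ᵥ w) i - w i)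
          = v ⬝ᵥ (Aᵀ *ᵥ w) - v ⬝ᵥ w := by
        simp [dotProduct, mul_sub, Finset.sum_sub_distrib]
      rw [this, hdot, sub_self]
    have hterm := (Finset.sum_eq_zero_iff_of_nonneg
      (fun i _ => mul_nonneg (hv i).le (sub_nonneg.mpr (hle i)))).mp hsum
    funext i
    have h5 := hterm i (Finset.mem_univ i)
    have h6 : (Aᵀ *ᵥ w) i - w i = 0 := by
      rcases mul_eq_zero.mp h5 with h | h
      · exact absurd h (hv i).ne'
      · exact h
    linarith
  -- positivity
  have hwne : ∃ j, 0 < w j := by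
    by_contra h
    push_neg at h
    apply hu0
    funext j
    have h9 := le_antisymm (h j) (hwnn j)
    exact abs_eq_zero.mp h9
  obtain ⟨j₀, hj₀⟩ := hwne
  have hfix : ((Aᵀ) ^ k) *ᵥ w = w := pf_pow_mulVec_fixed heq k
  have hwpos : ∀ i, 0 < w i := by
    intro i
    have h7 : ((Aᵀ) ^ k) = (A ^ k)ᵀ := (Matrix.transpose_pow A k).symm
    have h8 : 0 < (((Aᵀ) ^ k) *ᵥ w) i := by
      rw [h7]
      show 0 < ∑ j, (A ^ k)ᵀ i j * w j
      apply Finset.sum_pos'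
      · exact fun j _ => mul_nonneg (hk j i).le (hwnn j)
      · exact ⟨j₀, Finset.mem_univ j₀, mul_pos (hk j₀ i) hj₀⟩
    rwa [hfix] at h8
  exact ⟨w, hwpos, by rw [← Matrix.mulVec_transpose, heq]⟩

/-- Perron–Frobenius (convergence part): if a nonnegative primitive matrix `A`
has dominant eigenvalue 1, with entrywise positive eigenvector `v` for the
eigenvalue 1, then for any nonnegative nonzero starting vector `x⁽⁰⁾`, the
sequence `Aᵏ x⁽⁰⁾` converges to a positive multiple of `v`. -/
theorem perron_frobenius_power_iteration_converges
    (n : ℕ)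
    (A : Matrix (Fin n) (Fin n) ℝ)
    (hA : ∀ i j, 0 ≤ A i j)
    (hprim : ∃ k : ℕ, 1 ≤ k ∧ ∀ i j, 0 < (A ^ k) i j)
    (hone : (1 : ℝ) ∈ spectrum ℝ A)
    (hdom : ∀ μ : ℂ, μ ∈ spectrum ℂ (A.map Complex.ofReal) → μ ≠ 1 →
      ‖μ‖ < 1)
    (v : Fin n → ℝ)
    (hv : ∀ i, 0 < v i)
    (hveig : A.mulVec v = (1 : ℝ) • v)
    (x₀ : Fin n → ℝ)
    (hx₀ : ∀ i, 0 ≤ x₀ i)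
    (hx₀ne : x₀ ≠ 0) :
    ∃ α : ℝ, 0 < α ∧
      Tendsto (fun k => (A ^ k).mulVec x₀) atTop (nhds (α • v)) := by
  rcases Nat.eq_zero_or_pos n with hn0 | hn
  · exfalso
    apply hx₀ne
    subst hn0
    funext i
    exact i.elim0
  haveI : NeZero n := ⟨hn.ne'⟩
  haveI : Nonempty (Fin n) := ⟨⟨0, hn⟩⟩
  obtain ⟨k, hk1, hk⟩ := hprim
  have hAv : A *ᵥ v = v := by rw [hveig, one_smul]
  obtain ⟨w, hw, hwA⟩ := pf_exists_pos_left_eigvec hA hk hone hv hAv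
  set c : ℝ := w ⬝ᵥ v with hc
  have hcsum : ∑ i, w i * v i = c := rfl
  have hc0 : 0 < c := Finset.sum_pos (fun i _ => mul_pos (hw i) (hv i)) Finset.univ_nonempty
  set P : Matrix (Fin n) (Fin n) ℝ := c⁻¹ • vecMulVec v w with hP
  have hAv' : ∀ i, ∑ x, A i x * v x = v i := by
    intro i; have := congrFun hAv i; simpa [Matrix.mulVec, dotProduct] using this
  have hwA' : ∀ j, ∑ x, w x * A x j = w j := by
    intro j; have := congrFun hwA j; simpa [Matrix.vecMul, dotProduct] using this
  have hAP : A * P = P := by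
    rw [hP, Matrix.mul_smul]
    congr 1
    ext i j
    simp only [Matrix.mul_apply, Matrix.vecMulVec_apply]
    calc ∑ x, A i x * (v x * w j) = (∑ x, A i x * v x) * w j := by
          rw [Finset.sum_mul]; exact Finset.sum_congr rfl fun x _ => by ring
      _ = v i * w j := by rw [hAv' i]
  have hPA : P * A = P := by
    rw [hP, Matrix.smul_mul]
    congr 1
    ext i j
    simp only [Matrix.mul_apply, Matrix.vecMulVec_apply]
    calc ∑ x, v i * w x * A x j = v i * ∑ x, w x * A x j := by
          rw [Finset.mul_sum]; exact Finset.sum_congr rfl fun x _ => by ring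
      _ = v i * w j := by rw [hwA' j]
  have hMM : vecMulVec v w * vecMulVec v w = c • vecMulVec v w := by
    ext i j
    simp only [Matrix.mul_apply, Matrix.vecMulVec_apply, Matrix.smul_apply, smul_eq_mul]
    calc ∑ x, v i * w x * (v x * w j) = (∑ x, w x * v x) * (v i * w j) := by
          rw [Finset.sum_mul]; exact Finset.sum_congr rfl fun x _ => by ring
      _ = c * (v i * w j) := by rw [hcsum]
  have hPP : P * P = P := by
    rw [hP, Matrix.smul_mul, Matrix.mul_smul, hMM, smul_smul, smul_smul]
    congr 1
    field_simp
  -- spectral radius of A - P is < 1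
  have hspec := pf_spec_bound hn hk hdom hv hw hAv hwA hc hc0 hP
  have hradius : spectralRadius ℂ ((A - P).map Complex.ofReal) < 1 := by
    haveI : CompleteSpace (Matrix (Fin n) (Fin n) ℂ) :=
      FiniteDimensional.complete ℂ (Matrix (Fin n) (Fin n) ℂ)
    have := spectrum.spectralRadius_lt_of_forall_lt
      (a := (A - P).map Complex.ofReal) (r := 1) (fun z hz => hspec z hz)
    simpa using this
  have htnorm := pf_tendsto_pow_norm_zero ((A - P).map Complex.ofReal) hradius
  -- powers of the complexification
  have hmappow : ∀ m : ℕ, ((A - P).map Complex.ofReal) ^ m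
      = ((A - P) ^ m).map Complex.ofReal := by
    intro m
    induction m with
    | zero =>
      rw [pow_zero, pow_zero]
      exact (Matrix.map_one Complex.ofReal Complex.ofReal_zero Complex.ofReal_one).symm
    | succ m ih =>
      rw [pow_succ, pow_succ, ih]
      ext i j
      simp only [Matrix.mul_apply, Matrix.map_apply]
      push_cast
      rfl
  -- entrywise bounds
  have hrowsum : ∀ m : ℕ, ∀ i, ∑ j, |((A - P) ^ m) i j|
      ≤ ‖((A - P).map Complex.ofReal) ^ m‖ := by
    intro m i
    have h1 : (Finset.univ.sum fun j => ‖(((A - P) ^ m).map Complex.ofReal) i j‖₊)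
        ≤ ‖((A - P).map Complex.ofReal) ^ m‖₊ := by
      rw [Matrix.linfty_opNNNorm_def, hmappow m]
      exact Finset.le_sup (f := fun i => ∑ j, ‖(((A - P) ^ m).map Complex.ofReal) i j‖₊)
        (Finset.mem_univ i)
    have h2 : (Finset.univ.sum fun j => ‖(((A - P) ^ m).map Complex.ofReal) i j‖₊)
        = (Finset.univ.sum fun j => ‖((A - P) ^ m) i j‖₊) := by
      refine Finset.sum_congr rfl fun j _ => ?_
      simp [Matrix.map_apply]
    rw [h2] at h1
    have h3 := NNReal.coe_le_coe.mpr h1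
    rw [NNReal.coe_sum] at h3
    simpa [coe_nnnorm, Real.norm_eq_abs] using h3
  -- components of (A - P)^m *ᵥ x₀ tend to 0
  have hcomp : ∀ i, Tendsto (fun m : ℕ => (((A - P) ^ m) *ᵥ x₀) i) atTop (nhds 0) := by
    intro i
    have hbound : ∀ m : ℕ, ‖(((A - P) ^ m) *ᵥ x₀) i‖
        ≤ ‖((A - P).map Complex.ofReal) ^ m‖ * ‖x₀‖ := by
      intro m
      rw [Real.norm_eq_abs]
      calc |(((A - P) ^ m) *ᵥ x₀) i| = |∑ j, ((A - P) ^ m) i j * x₀ j| := rfl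
        _ ≤ ∑ j, |((A - P) ^ m) i j * x₀ j| := Finset.abs_sum_le_sum_abs _ _
        _ ≤ ∑ j, |((A - P) ^ m) i j| * ‖x₀‖ := by
            refine Finset.sum_le_sum fun j _ => ?_
            rw [abs_mul]
            exact mul_le_mul_of_nonneg_left
              (by simpa [Real.norm_eq_abs] using norm_le_pi_norm x₀ j) (abs_nonneg _)
        _ = (∑ j, |((A - P) ^ m) i j|) * ‖x₀‖ := by rw [Finset.sum_mul]
        _ ≤ ‖((A - P).map Complex.ofReal) ^ m‖ * ‖x₀‖ :=
            mul_le_mul_of_nonneg_right (hrowsum m i) (norm_nonneg _)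
    exact squeeze_zero_norm hbound (by simpa using htnorm.mul_const ‖x₀‖)
  have htendvec : Tendsto (fun m : ℕ => ((A - P) ^ m) *ᵥ x₀) atTop (nhds 0) := by
    rw [tendsto_pi_nhds]
    intro i
    simpa using hcomp i
  -- the limit point
  set α : ℝ := c⁻¹ * (w ⬝ᵥ x₀) with hα
  have hwx : 0 < w ⬝ᵥ x₀ := by
    obtain ⟨j₀, hj₀⟩ := Function.ne_iff.mp hx₀ne
    have hj₀' : 0 < x₀ j₀ := lt_of_le_of_ne (hx₀ j₀) (Ne.symm hj₀)
    apply Finset.sum_pos'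
    · exact fun j _ => mul_nonneg (hw j).le (hx₀ j)
    · exact ⟨j₀, Finset.mem_univ j₀, mul_pos (hw j₀) hj₀'⟩
  have hαpos : 0 < α := mul_pos (inv_pos.mpr hc0) hwx
  have hPx : P *ᵥ x₀ = α • v := by
    funext i
    show ∑ j, P i j * x₀ j = α * v i
    have h4 : ∀ j, P i j * x₀ j = (c⁻¹ * v i) * (w j * x₀ j) := by
      intro j
      rw [hP]
      simp only [Matrix.smul_apply, Matrix.vecMulVec_apply, smul_eq_mul]
      ring
    rw [Finset.sum_congr rfl fun j _ => h4 j, ← Finset.mul_sum]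
    have h5 : ∑ j, w j * x₀ j = w ⬝ᵥ x₀ := rfl
    rw [h5, hα]
    ring
  refine ⟨α, hαpos, ?_⟩
  have heven : ∀ᶠ m : ℕ in atTop, ((A - P) ^ m) *ᵥ x₀ + α • v = (A ^ m) *ᵥ x₀ := by
    filter_upwards [eventually_ge_atTop 1] with m hm
    have h6 : A ^ m = (A - P) ^ m + P := by
      rw [pf_B_pow hAP hPA hPP m hm, sub_add_cancel]
    rw [h6, Matrix.add_mulVec, hPx]
  have hlim : Tendsto (fun m : ℕ => ((A - P) ^ m) *ᵥ x₀ + α • v) atTop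
      (nhds (0 + α • v)) := htendvec.add tendsto_const_nhds
  rw [zero_add] at hlim
  exact hlim.congr' heven
end

section
/- Let A be an n×n real matrix with all entries nonnegative that is primitive, i.e., there exists k ≥ 1 such that every entry of Aᵏ is strictly positive. Let x⁽⁰⁾ ∈ ℝ^n be a vector with nonnegative components, x⁽⁰⁾ ≠ 0, and define the normalized power iteration x⁽ᵏ⁾ = Aᵏ x⁽⁰⁾ / ‖Aᵏ x⁽⁰⁾‖₁, where ‖·‖₁ denotes the sum of absolute values of the components. Then the sequence (x⁽ᵏ⁾) converges to the unique vector x* ∈ ℝ^n that is an eigenvector of A for its dominant eigenvalue, has all components nonnegative, and satisfies ‖x*‖₁ = 1; in particular x* is nonnegative and nonzero. -/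
open Matrix Filter

namespace NPI
open Finset
variable {n : ℕ}

noncomputable def S (u : Fin n → ℝ) : ℝ := ∑ i, u i

lemma S_pos {u : Fin n → ℝ} (hu : ∀ i, 0 ≤ u i) (hne : u ≠ 0) : 0 < S u := by
  have h1 : 0 ≤ S u := Finset.sum_nonneg fun i _ => hu i
  rcases h1.lt_or_eq with h | h
  · exact h
  · exfalso; apply hne; funext i
    have := (Finset.sum_eq_zero_iff_of_nonneg (fun i _ => hu i)).mp h.symm i (Finset.mem_univ i)
    simpa using this

lemma S_pos_of_pos (hn : 0 < n) {u : Fin n → ℝ} (hu : ∀ i, 0 < u i) : 0 < S u :=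
  Finset.sum_pos (fun i _ => hu i) ⟨⟨0, hn⟩, Finset.mem_univ _⟩

lemma mulVec_apply (B : Matrix (Fin n) (Fin n) ℝ) (u : Fin n → ℝ) (i : Fin n) :
    (B *ᵥ u) i = ∑ l, B i l * u l := rfl

lemma mulVec_pos {B : Matrix (Fin n) (Fin n) ℝ} (hB : ∀ i j, 0 < B i j)
    {u : Fin n → ℝ} (hu : ∀ i, 0 ≤ u i) (hne : u ≠ 0) : ∀ i, 0 < (B *ᵥ u) i := by
  intro i
  obtain ⟨j, hj⟩ : ∃ j, 0 < u j := by
    by_contra h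
    push_neg at h
    exact hne (funext fun j => le_antisymm (h j) (hu j))
  calc (0:ℝ) < B i j * u j := mul_pos (hB i j) hj
    _ ≤ ∑ l, B i l * u l := Finset.single_le_sum (fun l _ => mul_nonneg (hB i l).le (hu l)) (Finset.mem_univ j)
    _ = (B *ᵥ u) i := rfl

lemma mulVec_nonneg {B : Matrix (Fin n) (Fin n) ℝ} (hB : ∀ i j, 0 ≤ B i j)
    {u : Fin n → ℝ} (hu : ∀ i, 0 ≤ u i) : ∀ i, 0 ≤ (B *ᵥ u) i := fun i => by
  rw [mulVec_apply]; exact Finset.sum_nonneg fun l _ => mul_nonneg (hB i l) (hu l)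

lemma mulVec_mono {B : Matrix (Fin n) (Fin n) ℝ} (hB : ∀ i j, 0 ≤ B i j)
    {u v : Fin n → ℝ} (h : ∀ i, u i ≤ v i) : ∀ i, (B *ᵥ u) i ≤ (B *ᵥ v) i := fun i => by
  rw [mulVec_apply, mulVec_apply]
  exact Finset.sum_le_sum fun l _ => mul_le_mul_of_nonneg_left (h l) (hB i l)

/-- entries of powers of a nonneg matrix are nonneg -/
lemma pow_nonneg {A : Matrix (Fin n) (Fin n) ℝ} (hA : ∀ i j, 0 ≤ A i j) (m : ℕ) :
    ∀ i j, 0 ≤ (A ^ m) i j := by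
  induction m with
  | zero => intro i j; simp [Matrix.one_apply]; positivity
  | succ m ih =>
    intro i j
    rw [pow_succ, Matrix.mul_apply]
    exact Finset.sum_nonneg fun l _ => mul_nonneg (ih i l) (hA l j)

/-- eigen equation iterates -/
lemma mulVec_pow_eig {A : Matrix (Fin n) (Fin n) ℝ} {v : Fin n → ℝ} {c : ℝ}
    (h : A *ᵥ v = c • v) (m : ℕ) : (A ^ m) *ᵥ v = (c ^ m) • v := by
  induction m with
  | zero => simp
  | succ m ih =>
    rw [pow_succ, pow_succ, ← Matrix.mulVec_mulVec, h, Matrix.mulVec_smul, ih, smul_smul, mul_comm]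

/-- ratio growth comparison: if c * b^m ≤ d * a^m for all m, with positives, then b ≤ a -/
lemma le_of_pow_ratio {a b c d : ℝ} (ha : 0 < a) (hb : 0 < b) (hc : 0 < c) (hd : 0 < d)
    (h : ∀ m : ℕ, c * b ^ m ≤ d * a ^ m) : b ≤ a := by
  by_contra hab
  push_neg at hab
  have h1 : ∀ m : ℕ, c / d ≤ (a / b) ^ m := by
    intro m
    rw [div_pow, div_le_div_iff₀ hd (by positivity)]
    calc c * b ^ m ≤ d * a ^ m := h m
      _ = a ^ m * d := mul_comm _ _
  have h2 : Tendsto (fun m : ℕ => (a / b) ^ m) atTop (nhds 0) :=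
    tendsto_pow_atTop_nhds_zero_of_lt_one (by positivity) (by rw [div_lt_one hb]; exact hab)
  have h3 := h2.eventually (eventually_lt_nhds (show (0:ℝ) < c / d by positivity))
  obtain ⟨m, hm⟩ := h3.exists
  exact absurd (h1 m) (not_le.mpr hm)


section B
variable {B : Matrix (Fin n) (Fin n) ℝ}
lemma eig_pos (hB : ∀ i j, 0 < B i j) {y : Fin n → ℝ} {mu : ℝ}
    (hy : ∀ i, 0 ≤ y i) (hyne : y ≠ 0) (hey : B *ᵥ y = mu • y) :
    0 < mu ∧ ∀ i, 0 < y i := by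
  have hpos := mulVec_pos hB hy hyne
  obtain ⟨j, hj⟩ : ∃ j, 0 < y j := by
    by_contra h; push_neg at h
    exact hyne (funext fun j => le_antisymm (h j) (hy j))
  have hmu : 0 < mu := by
    have := hpos j
    rw [hey] at this
    simp only [Pi.smul_apply, smul_eq_mul] at this
    by_contra h
    push_neg at h
    nlinarith [hy j]
  refine ⟨hmu, fun i => ?_⟩
  have := hpos i
  rw [hey] at this
  simp only [Pi.smul_apply, smul_eq_mul] at this
  by_contra h
  push_neg at h
  nlinarith

lemma compare (hn : 0 < n) (hB : ∀ i j, 0 < B i j)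
    {v : Fin n → ℝ} {lam : ℝ} (hv : ∀ i, 0 < v i) (hev : B *ᵥ v = lam • v)
    {y : Fin n → ℝ} {mu : ℝ} (hy : ∀ i, 0 ≤ y i) (hyne : y ≠ 0) (hey : B *ᵥ y = mu • y) :
    mu = lam ∧ ∃ t : ℝ, 0 < t ∧ y = t • v := by
  have hvne : v ≠ 0 := fun h => by
    have := hv ⟨0, hn⟩; rw [h] at this; exact lt_irrefl _ this
  obtain ⟨hlam, -⟩ := eig_pos hB (fun i => (hv i).le) hvne hev
  obtain ⟨hmu, hypos⟩ := eig_pos hB hy hyne hey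
  have hne : (Finset.univ : Finset (Fin n)).Nonempty := ⟨⟨0, hn⟩, Finset.mem_univ _⟩
  -- t = min y/v
  obtain ⟨i₀, -, hi₀⟩ := Finset.exists_mem_eq_inf' hne (fun i => y i / v i)
  set t := y i₀ / v i₀ with ht
  have htpos : 0 < t := div_pos (hypos i₀) (hv i₀)
  have hle : ∀ i, t * v i ≤ y i := by
    intro i
    have h0 : Finset.univ.inf' hne (fun i => y i / v i) ≤ y i / v i :=
      Finset.inf'_le _ (Finset.mem_univ i)
    rw [hi₀] at h0
    rw [← le_div_iff₀ (hv i)]; exact h0.trans_eq (by ring)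
  -- s = min v/y
  obtain ⟨i₁, -, hi₁⟩ := Finset.exists_mem_eq_inf' hne (fun i => v i / y i)
  set s := v i₁ / y i₁ with hs
  have hspos : 0 < s := div_pos (hv i₁) (hypos i₁)
  have hle2 : ∀ i, s * y i ≤ v i := by
    intro i
    have h0 : Finset.univ.inf' hne (fun i => v i / y i) ≤ v i / y i :=
      Finset.inf'_le _ (Finset.mem_univ i)
    rw [hi₁] at h0
    rw [← le_div_iff₀ (hypos i)]; exact h0.trans_eq (by ring)
  have hBm : ∀ m : ℕ, ∀ i j, 0 ≤ (B ^ m) i j := pow_nonneg (fun i j => (hB i j).le)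
  -- lam ≤ mu
  have h1 : lam ≤ mu := by
    refine le_of_pow_ratio hmu hlam (mul_pos htpos (hv i₀)) (hypos i₀) fun m => ?_
    have := mulVec_mono (hBm m) hle i₀
    rw [show (fun i => t * v i) = t • v from rfl, Matrix.mulVec_smul,
      mulVec_pow_eig hev m, mulVec_pow_eig hey m] at this
    simp only [Pi.smul_apply, smul_eq_mul] at this
    calc t * v i₀ * lam ^ m = t * (lam ^ m * v i₀) := by ring
      _ ≤ mu ^ m * y i₀ := this
      _ = y i₀ * mu ^ m := mul_comm _ _
  have h2 : mu ≤ lam := by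
    refine le_of_pow_ratio hlam hmu (mul_pos hspos (hypos i₁)) (hv i₁) fun m => ?_
    have := mulVec_mono (hBm m) hle2 i₁
    rw [show (fun i => s * y i) = s • y from rfl, Matrix.mulVec_smul,
      mulVec_pow_eig hey m, mulVec_pow_eig hev m] at this
    simp only [Pi.smul_apply, smul_eq_mul] at this
    calc s * y i₁ * mu ^ m = s * (mu ^ m * y i₁) := by ring
      _ ≤ lam ^ m * v i₁ := this
      _ = v i₁ * lam ^ m := mul_comm _ _
  have hml : mu = lam := le_antisymm h2 h1
  refine ⟨hml, t, htpos, ?_⟩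
  -- z := y - t • v
  set z := y - t • v with hz
  have hznn : ∀ i, 0 ≤ z i := fun i => by
    simp only [hz, Pi.sub_apply, Pi.smul_apply, smul_eq_mul]; linarith [hle i]
  have hzi₀ : z i₀ = 0 := by
    simp only [hz, Pi.sub_apply, Pi.smul_apply, smul_eq_mul, ht]
    rw [div_mul_cancel₀ _ (ne_of_gt (hv i₀)), sub_self]
  have hez : B *ᵥ z = lam • z := by
    rw [hz, Matrix.mulVec_sub, Matrix.mulVec_smul, hev, hey, hml, smul_sub, smul_smul, smul_smul, mul_comm]
  by_cases hzz : z = 0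
  · rw [hz] at hzz; rw [sub_eq_zero] at hzz; exact hzz
  · exfalso
    obtain ⟨-, hzp⟩ := eig_pos hB hznn hzz hez
    exact absurd hzi₀ (ne_of_gt (hzp i₀))


end B

def hne (hn : 0 < n) : (Finset.univ : Finset (Fin n)).Nonempty := ⟨⟨0, hn⟩, Finset.mem_univ _⟩

noncomputable def mm (hn : 0 < n) (B : Matrix (Fin n) (Fin n) ℝ) (g : Fin n → ℝ) : ℝ :=
  Finset.univ.inf' (hne hn) (fun i => (B *ᵥ g) i / g i)

noncomputable def MM (hn : 0 < n) (B : Matrix (Fin n) (Fin n) ℝ) (g : Fin n → ℝ) : ℝ :=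
  Finset.univ.sup' (hne hn) (fun i => (B *ᵥ g) i / g i)

section
variable (hn : 0 < n) {B : Matrix (Fin n) (Fin n) ℝ}

lemma mm_le (g : Fin n → ℝ) (i : Fin n) : mm hn B g ≤ (B *ᵥ g) i / g i :=
  Finset.inf'_le _ (Finset.mem_univ i)

lemma le_MM (g : Fin n → ℝ) (i : Fin n) : (B *ᵥ g) i / g i ≤ MM hn B g :=
  Finset.le_sup' (fun i => (B *ᵥ g) i / g i) (Finset.mem_univ i)

lemma mm_le_MM (g : Fin n → ℝ) : mm hn B g ≤ MM hn B g :=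
  (mm_le hn g ⟨0, hn⟩).trans (le_MM hn g ⟨0, hn⟩)

lemma mm_mul_le (hB : ∀ i j, 0 < B i j) {g : Fin n → ℝ} (hg : ∀ i, 0 < g i) (i : Fin n) :
    mm hn B g * g i ≤ (B *ᵥ g) i := by
  have := mm_le hn (B := B) g i
  rw [le_div_iff₀ (hg i)] at this
  exact this

lemma le_MM_mul (hB : ∀ i j, 0 < B i j) {g : Fin n → ℝ} (hg : ∀ i, 0 < g i) (i : Fin n) :
    (B *ᵥ g) i ≤ MM hn B g * g i := by
  have := le_MM hn (B := B) g i
  rw [div_le_iff₀ (hg i)] at this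
  exact this

lemma mm_pos (hB : ∀ i j, 0 < B i j) {g : Fin n → ℝ} (hg : ∀ i, 0 < g i) : 0 < mm hn B g := by
  obtain ⟨i, -, hi⟩ := Finset.exists_mem_eq_inf' (hne hn) (fun i => (B *ᵥ g) i / g i)
  rw [mm, hi]
  have : ∀ i', 0 < (B *ᵥ g) i' := by
    intro i'
    rw [mulVec_apply]
    exact Finset.sum_pos (fun l _ => mul_pos (hB i' l) (hg l)) (hne hn)
  exact div_pos (this i) (hg i)

lemma mm_smul (c : ℝ) (hc : 0 < c) (g : Fin n → ℝ) : mm hn B (c • g) = mm hn B g := by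
  unfold mm
  congr 1
  funext i
  rw [Matrix.mulVec_smul]
  simp only [Pi.smul_apply, smul_eq_mul]
  rw [mul_div_mul_left _ _ (ne_of_gt hc)]

lemma MM_smul (c : ℝ) (hc : 0 < c) (g : Fin n → ℝ) : MM hn B (c • g) = MM hn B g := by
  unfold MM
  congr 1
  funext i
  rw [Matrix.mulVec_smul]
  simp only [Pi.smul_apply, smul_eq_mul]
  rw [mul_div_mul_left _ _ (ne_of_gt hc)]

lemma MM_step (hB : ∀ i j, 0 < B i j) {g : Fin n → ℝ} (hg : ∀ i, 0 < g i) :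
    MM hn B (B *ᵥ g) ≤ MM hn B g := by
  have hBg : ∀ i, 0 < (B *ᵥ g) i := by
    intro i; rw [mulVec_apply]
    exact Finset.sum_pos (fun l _ => mul_pos (hB i l) (hg l)) (hne hn)
  apply Finset.sup'_le
  intro i _
  rw [div_le_iff₀ (hBg i), mulVec_apply]
  calc ∑ l, B i l * (B *ᵥ g) l ≤ ∑ l, B i l * (MM hn B g * g l) :=
        Finset.sum_le_sum fun l _ => mul_le_mul_of_nonneg_left (le_MM_mul hn hB hg l) (hB i l).le
    _ = MM hn B g * ∑ l, B i l * g l := by rw [Finset.mul_sum]; congr 1; funext l; ring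
    _ = MM hn B g * (B *ᵥ g) i := by rw [← mulVec_apply]

lemma mm_step (hB : ∀ i j, 0 < B i j) {g : Fin n → ℝ} (hg : ∀ i, 0 < g i)
    {β γ δ : ℝ} (hβpos : 0 < β) (hβ : ∀ i j, β ≤ B i j) (hγ : ∀ i j, B i j ≤ γ)
    (hδpos : 0 < δ) (hδ : ∀ i, δ ≤ g i) (hS : S g = 1) :
    mm hn B g + (β * δ / γ) * (MM hn B g - mm hn B g) ≤ mm hn B (B *ᵥ g) := by
  have hγpos : 0 < γ := hβpos.trans_le ((hβ ⟨0,hn⟩ ⟨0,hn⟩).trans (hγ ⟨0,hn⟩ ⟨0,hn⟩))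
  have hBg : ∀ i, 0 < (B *ᵥ g) i := by
    intro i; rw [mulVec_apply]
    exact Finset.sum_pos (fun l _ => mul_pos (hB i l) (hg l)) (hne hn)
  have hgap : 0 ≤ MM hn B g - mm hn B g := sub_nonneg.mpr (mm_le_MM hn g)
  -- denominator bound
  have hden : ∀ i, (B *ᵥ g) i ≤ γ := by
    intro i
    rw [mulVec_apply]
    calc ∑ l, B i l * g l ≤ ∑ l, γ * g l :=
          Finset.sum_le_sum fun l _ => mul_le_mul_of_nonneg_right (hγ i l) (hg l).le
      _ = γ * S g := by rw [S, Finset.mul_sum]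
      _ = γ := by rw [hS, mul_one]
  obtain ⟨j₀, -, hj₀⟩ := Finset.exists_mem_eq_sup' (hne hn) (fun i => (B *ᵥ g) i / g i)
  have hj₀' : (B *ᵥ g) j₀ = MM hn B g * g j₀ := by
    rw [MM, hj₀, div_mul_cancel₀ _ (ne_of_gt (hg j₀))]
  apply Finset.le_inf'
  intro i _
  rw [le_div_iff₀ (hBg i)]
  have hnum : mm hn B g * (B *ᵥ g) i + β * δ * (MM hn B g - mm hn B g) ≤ (B *ᵥ (B *ᵥ g)) i := by
    rw [mulVec_apply (B := B) (u := B *ᵥ g)]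
    have key : ∑ l, B i l * (mm hn B g * g l) + B i j₀ * ((B *ᵥ g) j₀ - mm hn B g * g j₀)
        ≤ ∑ l, B i l * (B *ᵥ g) l := by
      have expand : ∑ l, B i l * (B *ᵥ g) l - ∑ l, B i l * (mm hn B g * g l)
          = ∑ l, B i l * ((B *ᵥ g) l - mm hn B g * g l) := by
        rw [← Finset.sum_sub_distrib]; congr 1; funext l; ring
      have single : B i j₀ * ((B *ᵥ g) j₀ - mm hn B g * g j₀)
          ≤ ∑ l, B i l * ((B *ᵥ g) l - mm hn B g * g l) :=
        Finset.single_le_sum (fun l _ =>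
          mul_nonneg (hB i l).le (sub_nonneg.mpr (mm_mul_le hn hB hg l))) (Finset.mem_univ j₀)
      linarith [expand, single]
    have t1 : ∑ l, B i l * (mm hn B g * g l) = mm hn B g * (B *ᵥ g) i := by
      rw [mulVec_apply, Finset.mul_sum]; congr 1; funext l; ring
    have t2 : β * δ * (MM hn B g - mm hn B g) ≤ B i j₀ * ((B *ᵥ g) j₀ - mm hn B g * g j₀) := by
      rw [hj₀']
      have : (MM hn B g - mm hn B g) * δ ≤ (MM hn B g - mm hn B g) * g j₀ :=
        mul_le_mul_of_nonneg_left (hδ j₀) hgap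
      calc β * δ * (MM hn B g - mm hn B g) = β * ((MM hn B g - mm hn B g) * δ) := by ring
        _ ≤ β * ((MM hn B g - mm hn B g) * g j₀) := mul_le_mul_of_nonneg_left this hβpos.le
        _ ≤ B i j₀ * ((MM hn B g - mm hn B g) * g j₀) :=
            mul_le_mul_of_nonneg_right (hβ i j₀)
              (mul_nonneg hgap (hg j₀).le)
        _ = B i j₀ * (MM hn B g * g j₀ - mm hn B g * g j₀) := by ring
    calc mm hn B g * (B *ᵥ g) i + β * δ * (MM hn B g - mm hn B g)
        ≤ ∑ l, B i l * (mm hn B g * g l) + B i j₀ * ((B *ᵥ g) j₀ - mm hn B g * g j₀) := by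
          rw [t1]; linarith [t2]
      _ ≤ ∑ l, B i l * (B *ᵥ g) l := key
  -- combine with denominator
  have hfrac : (β * δ / γ) * (MM hn B g - mm hn B g) * (B *ᵥ g) i
      ≤ β * δ * (MM hn B g - mm hn B g) := by
    rw [div_mul_eq_mul_div, div_mul_eq_mul_div, div_le_iff₀ hγpos]
    have h1 : 0 ≤ β * δ * (MM hn B g - mm hn B g) := by positivity
    calc β * δ * (MM hn B g - mm hn B g) * (B *ᵥ g) i
        ≤ β * δ * (MM hn B g - mm hn B g) * γ := mul_le_mul_of_nonneg_left (hden i) h1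
      _ = β * δ * (MM hn B g - mm hn B g) * γ := rfl
  calc (mm hn B g + β * δ / γ * (MM hn B g - mm hn B g)) * (B *ᵥ g) i
      = mm hn B g * (B *ᵥ g) i + (β * δ / γ) * (MM hn B g - mm hn B g) * (B *ᵥ g) i := by ring
    _ ≤ mm hn B g * (B *ᵥ g) i + β * δ * (MM hn B g - mm hn B g) := by linarith [hfrac]
    _ ≤ (B *ᵥ (B *ᵥ g)) i := hnum

lemma mm_mono (hB : ∀ i j, 0 < B i j) {g : Fin n → ℝ} (hg : ∀ i, 0 < g i) :
    mm hn B g ≤ mm hn B (B *ᵥ g) := by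
  have hBg : ∀ i, 0 < (B *ᵥ g) i := by
    intro i; rw [mulVec_apply]
    exact Finset.sum_pos (fun l _ => mul_pos (hB i l) (hg l)) (hne hn)
  apply Finset.le_inf'
  intro i _
  rw [le_div_iff₀ (hBg i), mulVec_apply (B := B) (u := B *ᵥ g)]
  calc mm hn B g * (B *ᵥ g) i = ∑ l, B i l * (mm hn B g * g l) := by
        rw [mulVec_apply, Finset.mul_sum]; congr 1; funext l; ring
    _ ≤ ∑ l, B i l * (B *ᵥ g) l :=
        Finset.sum_le_sum fun l _ => mul_le_mul_of_nonneg_left (mm_mul_le hn hB hg l) (hB i l).le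

lemma S_mulVec_bounds (hB : ∀ i j, 0 < B i j) {g : Fin n → ℝ} (hg : ∀ i, 0 < g i) :
    mm hn B g * S g ≤ S (B *ᵥ g) ∧ S (B *ᵥ g) ≤ MM hn B g * S g := by
  constructor
  · calc mm hn B g * S g = ∑ i, mm hn B g * g i := by rw [S, Finset.mul_sum]
      _ ≤ ∑ i, (B *ᵥ g) i := Finset.sum_le_sum fun i _ => mm_mul_le hn hB hg i
      _ = S (B *ᵥ g) := rfl
  · calc S (B *ᵥ g) = ∑ i, (B *ᵥ g) i := rfl
      _ ≤ ∑ i, MM hn B g * g i := Finset.sum_le_sum fun i _ => le_MM_mul hn hB hg i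
      _ = MM hn B g * S g := by rw [S, Finset.mul_sum]

end

section Engine
variable {B : Matrix (Fin n) (Fin n) ℝ}

lemma norm_smul_eq {g : Fin n → ℝ} (c : ℝ) (hc : 0 < c) :
    (S (c • g))⁻¹ • (c • g) = (S g)⁻¹ • g := by
  have hc' : c ≠ 0 := ne_of_gt hc
  have h : S (c • g) = c * S g := by
    simp [S, Finset.mul_sum]
  rw [h, smul_smul]
  have : (c * S g)⁻¹ * c = (S g)⁻¹ := by
    rw [mul_inv]
    calc c⁻¹ * (S g)⁻¹ * c = (S g)⁻¹ * (c⁻¹ * c) := by ring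
      _ = (S g)⁻¹ := by rw [inv_mul_cancel₀ hc', mul_one]
  rw [this]

lemma engine1 (hn : 0 < n) (hB : ∀ i j, 0 < B i j)
    {p : Fin n → ℝ} (hp : ∀ i, 0 ≤ p i) (hpne : p ≠ 0) :
    ∃ v : Fin n → ℝ, ∃ lam : ℝ, (∀ i, 0 < v i) ∧ S v = 1 ∧ B *ᵥ v = lam • v ∧ 0 < lam ∧
      Tendsto (fun t => (S ((B ^ t) *ᵥ p))⁻¹ • ((B ^ t) *ᵥ p)) atTop (nhds v) := by
  have i0 : Fin n := ⟨0, hn⟩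
  -- extremal entries
  have hneP : (Finset.univ : Finset (Fin n × Fin n)).Nonempty := ⟨(⟨0,hn⟩,⟨0,hn⟩), Finset.mem_univ _⟩
  obtain ⟨q0, -, hq0⟩ := Finset.exists_mem_eq_inf' hneP (fun q : Fin n × Fin n => B q.1 q.2)
  set β := Finset.univ.inf' hneP (fun q : Fin n × Fin n => B q.1 q.2) with hβdef
  set γ := Finset.univ.sup' hneP (fun q : Fin n × Fin n => B q.1 q.2) with hγdef
  have hβ : ∀ i j, β ≤ B i j := fun i j => Finset.inf'_le _ (Finset.mem_univ (i,j))
  have hγ : ∀ i j, B i j ≤ γ := fun i j =>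
    Finset.le_sup' (fun q : Fin n × Fin n => B q.1 q.2) (Finset.mem_univ (i,j))
  have hβpos : 0 < β := by rw [hq0]; exact hB q0.1 q0.2
  have hγpos : 0 < γ := lt_of_lt_of_le hβpos ((hβ i0 i0).trans (hγ i0 i0))
  have hβγ : β ≤ γ := (hβ i0 i0).trans (hγ i0 i0)
  have hn' : (1:ℝ) ≤ (n:ℝ) := by exact_mod_cast hn
  set δ := β / (n * γ) with hδdef
  have hδpos : 0 < δ := div_pos hβpos (by positivity)
  set α := β * δ / γ with hαdef
  have hαpos : 0 < α := by positivity
  have hδ1 : δ ≤ 1 := by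
    rw [hδdef, div_le_one (by positivity)]
    nlinarith
  have hα1 : α ≤ 1 := by
    rw [hαdef, div_le_one hγpos]
    nlinarith
  -- powers applied to p
  have hqnn : ∀ t, ∀ i, 0 ≤ ((B ^ t) *ᵥ p) i :=
    fun t => mulVec_nonneg (pow_nonneg (fun i j => (hB i j).le) t) hp
  have hpow_succ : ∀ t : ℕ, (B ^ (t+1)) *ᵥ p = B *ᵥ ((B ^ t) *ᵥ p) := by
    intro t; rw [Matrix.mulVec_mulVec, ← pow_succ']
  have hppos : ∀ t, ∀ i, 0 < ((B ^ (t+1)) *ᵥ p) i := by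
    intro t
    induction t with
    | zero =>
      rw [hpow_succ 0]
      have h0 : (B ^ 0) *ᵥ p = p := by rw [pow_zero, Matrix.one_mulVec]
      rw [h0]
      exact mulVec_pos hB hp hpne
    | succ t ih =>
      rw [hpow_succ (t+1)]
      have hne0 : ((B ^ (t+1)) *ᵥ p) ≠ 0 := by
        intro h0
        have := ih ⟨0,hn⟩
        rw [h0] at this
        exact lt_irrefl _ this
      exact mulVec_pos hB (fun i => (ih i).le) hne0
  have hqne : ∀ t, ((B ^ t) *ᵥ p) ≠ 0 := by
    intro t h0
    have := hppos t ⟨0,hn⟩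
    rw [hpow_succ t, h0, Matrix.mulVec_zero] at this
    exact lt_irrefl _ this
  have hSq : ∀ t, 0 < S ((B ^ t) *ᵥ p) := fun t => S_pos (hqnn t) (hqne t)
  -- normalized iterates
  set u : ℕ → Fin n → ℝ := fun t => (S ((B ^ (t+1)) *ᵥ p))⁻¹ • ((B ^ (t+1)) *ᵥ p) with hudef
  have hupos : ∀ t i, 0 < u t i := by
    intro t i
    rw [hudef]
    simp only [Pi.smul_apply, smul_eq_mul]
    exact mul_pos (inv_pos.mpr (hSq (t+1))) (hppos t i)
  have hune : ∀ t, u t ≠ 0 := by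
    intro t h0
    have := hupos t ⟨0,hn⟩
    rw [h0] at this
    exact lt_irrefl _ this
  have hSu : ∀ t, S (u t) = 1 := by
    intro t
    rw [hudef]
    show ∑ i, (S ((B ^ (t+1)) *ᵥ p))⁻¹ * ((B ^ (t+1)) *ᵥ p) i = 1
    rw [← Finset.mul_sum]
    exact inv_mul_cancel₀ (ne_of_gt (hSq (t+1)))
  have hu_le_one : ∀ t i, u t i ≤ 1 := by
    intro t i
    rw [← hSu t]
    exact Finset.single_le_sum (fun j _ => (hupos t j).le) (Finset.mem_univ i)
  have hu_rec : ∀ t, u (t+1) = (S (B *ᵥ u t))⁻¹ • (B *ᵥ u t) := by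
    intro t
    have e2 : B *ᵥ u t = (S ((B ^ (t+1)) *ᵥ p))⁻¹ • ((B ^ (t+2)) *ᵥ p) := by
      rw [hudef]
      show B *ᵥ ((S ((B ^ (t+1)) *ᵥ p))⁻¹ • ((B ^ (t+1)) *ᵥ p)) = _
      rw [Matrix.mulVec_smul, hpow_succ (t+1)]
    calc u (t+1) = (S ((B ^ (t+2)) *ᵥ p))⁻¹ • ((B ^ (t+2)) *ᵥ p) := rfl
      _ = (S (B *ᵥ u t))⁻¹ • (B *ᵥ u t) := by
          rw [e2, norm_smul_eq _ (inv_pos.mpr (hSq (t+1)))]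
  -- lower bound δ on entries of u t
  have hδu : ∀ t i, δ ≤ u t i := by
    intro t i
    have e : u t i = (S (B *ᵥ ((B ^ t) *ᵥ p)))⁻¹ * (B *ᵥ ((B ^ t) *ᵥ p)) i := by
      rw [hudef]
      simp only [Pi.smul_apply, smul_eq_mul]
      rw [hpow_succ t]
    set q := (B ^ t) *ᵥ p with hqdef
    have hq_nn := hqnn t
    have hSq' : 0 < S q := hSq t
    have hnum : β * S q ≤ (B *ᵥ q) i := by
      rw [mulVec_apply]
      calc β * S q = ∑ l, β * q l := by rw [S, Finset.mul_sum]
        _ ≤ ∑ l, B i l * q l :=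
            Finset.sum_le_sum fun l _ => mul_le_mul_of_nonneg_right (hβ i l) (hq_nn l)
    have hden : S (B *ᵥ q) ≤ (n * γ) * S q := by
      have hrow : ∀ i', (B *ᵥ q) i' ≤ γ * S q := by
        intro i'
        rw [mulVec_apply]
        calc ∑ l, B i' l * q l ≤ ∑ l, γ * q l :=
              Finset.sum_le_sum fun l _ => mul_le_mul_of_nonneg_right (hγ i' l) (hq_nn l)
          _ = γ * S q := by rw [S, Finset.mul_sum]
      calc S (B *ᵥ q) = ∑ i', (B *ᵥ q) i' := rfl
        _ ≤ ∑ _i' : Fin n, γ * S q := Finset.sum_le_sum fun i' _ => hrow i'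
        _ = n * (γ * S q) := by
            rw [Finset.sum_const, Finset.card_univ, Fintype.card_fin, nsmul_eq_mul]
        _ = (n * γ) * S q := by ring
    have hden_pos : 0 < S (B *ᵥ q) := by
      have : ∀ i', 0 < (B *ᵥ q) i' := mulVec_pos hB hq_nn (hqne t)
      exact S_pos_of_pos hn this
    rw [e]
    have step1 : δ = (β * S q) / ((n * γ) * S q) := by
      rw [hδdef, mul_div_mul_right _ _ (ne_of_gt hSq')]
    have step2 : (β * S q) / ((n * γ) * S q) ≤ (B *ᵥ q) i / ((n * γ) * S q) :=
      (div_le_div_iff_of_pos_right (by positivity)).mpr hnum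
    have step3 : (B *ᵥ q) i / ((n * γ) * S q) ≤ (B *ᵥ q) i / S (B *ᵥ q) :=
      div_le_div_of_nonneg_left (mulVec_nonneg (fun a b => (hB a b).le) hq_nn i) hden_pos hden
    rw [inv_mul_eq_div]
    rw [step1]
    exact step2.trans step3
  -- min/max ratios
  set mt : ℕ → ℝ := fun t => mm hn B (u t) with hmtdef
  set Mt : ℕ → ℝ := fun t => MM hn B (u t) with hMtdef
  have hBu_pos : ∀ t, ∀ i, 0 < (B *ᵥ u t) i :=
    fun t => mulVec_pos hB (fun i => (hupos t i).le) (hune t)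
  have hSBu_pos : ∀ t, 0 < S (B *ᵥ u t) := fun t => S_pos_of_pos hn (hBu_pos t)
  have hsmul_step : ∀ t, mt (t+1) = mm hn B (B *ᵥ u t) ∧ Mt (t+1) = MM hn B (B *ᵥ u t) := by
    intro t
    have e : u (t+1) = (S (B *ᵥ u t))⁻¹ • (B *ᵥ u t) := hu_rec t
    constructor
    · show mm hn B (u (t+1)) = _
      rw [e, mm_smul hn _ (inv_pos.mpr (hSBu_pos t))]
    · show MM hn B (u (t+1)) = _
      rw [e, MM_smul hn _ (inv_pos.mpr (hSBu_pos t))]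
  have hkey1 : ∀ t, mt t + α * (Mt t - mt t) ≤ mt (t+1) := by
    intro t
    rw [(hsmul_step t).1, hαdef]
    exact mm_step hn hB (hupos t) hβpos hβ hγ hδpos (hδu t) (hSu t)
  have hkey2 : ∀ t, Mt (t+1) ≤ Mt t := by
    intro t
    rw [(hsmul_step t).2]
    exact MM_step hn hB (hupos t)
  have hkey3 : ∀ t, mt t ≤ Mt t := fun t => mm_le_MM hn (u t)
  have hgap_nn : ∀ t, 0 ≤ Mt t - mt t := fun t => sub_nonneg.mpr (hkey3 t)
  have hgap_rec : ∀ t, Mt (t+1) - mt (t+1) ≤ (1-α) * (Mt t - mt t) := by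
    intro t
    have h1 := hkey1 t
    have h2 := hkey2 t
    nlinarith [hgap_nn t]
  have hθ0 : (0:ℝ) ≤ 1 - α := by linarith
  have hθ1 : 1 - α < 1 := by linarith
  have hgap_geom : ∀ t, Mt t - mt t ≤ (1-α)^t * (Mt 0 - mt 0) := by
    intro t
    induction t with
    | zero => simp
    | succ t ih =>
      calc Mt (t+1) - mt (t+1) ≤ (1-α) * (Mt t - mt t) := hgap_rec t
        _ ≤ (1-α) * ((1-α)^t * (Mt 0 - mt 0)) := mul_le_mul_of_nonneg_left ih hθ0
        _ = (1-α)^(t+1) * (Mt 0 - mt 0) := by ring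
  have hm_mono : Monotone mt := monotone_nat_of_le_succ fun t => by
    have := hkey1 t
    nlinarith [hgap_nn t]
  have hM_anti : Antitone Mt := antitone_nat_of_succ_le hkey2
  have hm0pos : 0 < mt 0 := mm_pos hn hB (hupos 0)
  have hmt_pos : ∀ t, 0 < mt t := fun t => lt_of_lt_of_le hm0pos (hm_mono (Nat.zero_le t))
  have hs_mem : ∀ t, mt t ≤ S (B *ᵥ u t) ∧ S (B *ᵥ u t) ≤ Mt t := by
    intro t
    obtain ⟨h1, h2⟩ := S_mulVec_bounds hn hB (hupos t)
    rw [hSu t, mul_one] at h1 h2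
    exact ⟨h1, h2⟩
  -- central deviation bound
  have habs : ∀ t i, |(B *ᵥ u t) i - S (B *ᵥ u t) * u t i| ≤ Mt t - mt t := by
    intro t i
    have hr1 : mt t * u t i ≤ (B *ᵥ u t) i := mm_mul_le hn hB (hupos t) i
    have hr2 : (B *ᵥ u t) i ≤ Mt t * u t i := le_MM_mul hn hB (hupos t) i
    have h3 : mt t * u t i ≤ S (B *ᵥ u t) * u t i :=
      mul_le_mul_of_nonneg_right (hs_mem t).1 (hupos t i).le
    have h4 : S (B *ᵥ u t) * u t i ≤ Mt t * u t i :=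
      mul_le_mul_of_nonneg_right (hs_mem t).2 (hupos t i).le
    have h5 : (Mt t - mt t) * u t i ≤ (Mt t - mt t) * 1 :=
      mul_le_mul_of_nonneg_left (hu_le_one t i) (hgap_nn t)
    rw [abs_le]
    constructor <;> nlinarith
  -- successive differences
  have hstep : ∀ t i, |u (t+1) i - u t i| ≤ (mt 0)⁻¹ * (Mt 0 - mt 0) * (1-α)^t := by
    intro t i
    have hst_pos : 0 < S (B *ᵥ u t) := hSBu_pos t
    have e : u (t+1) i = (S (B *ᵥ u t))⁻¹ * (B *ᵥ u t) i := by
      rw [hu_rec t]; rfl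
    have e2 : u (t+1) i - u t i = (S (B *ᵥ u t))⁻¹ * ((B *ᵥ u t) i - S (B *ᵥ u t) * u t i) := by
      rw [e]
      field_simp
    rw [e2, abs_mul, abs_of_pos (inv_pos.mpr hst_pos)]
    have b1 : (S (B *ᵥ u t))⁻¹ ≤ (mt 0)⁻¹ := by
      apply inv_anti₀ hm0pos
      exact le_trans (hm_mono (Nat.zero_le t)) (hs_mem t).1
    have b2 : |(B *ᵥ u t) i - S (B *ᵥ u t) * u t i| ≤ (1-α)^t * (Mt 0 - mt 0) :=
      (habs t i).trans (hgap_geom t)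
    calc (S (B *ᵥ u t))⁻¹ * |(B *ᵥ u t) i - S (B *ᵥ u t) * u t i|
        ≤ (mt 0)⁻¹ * ((1-α)^t * (Mt 0 - mt 0)) := by
          apply mul_le_mul b1 b2 (abs_nonneg _) (by positivity)
      _ = (mt 0)⁻¹ * (Mt 0 - mt 0) * (1-α)^t := by ring
  -- componentwise Cauchy, limit v
  have hCauchy : ∀ i, ∃ L, Tendsto (fun t => u t i) atTop (nhds L) := by
    intro i
    apply cauchySeq_tendsto_of_complete
    apply cauchySeq_of_le_geometric (1-α) ((mt 0)⁻¹ * (Mt 0 - mt 0)) hθ1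
    intro t
    rw [Real.dist_eq]
    calc |u t i - u (t+1) i| = |u (t+1) i - u t i| := abs_sub_comm _ _
      _ ≤ (mt 0)⁻¹ * (Mt 0 - mt 0) * (1-α)^t := hstep t i
  choose v hv using hCauchy
  have huv : Tendsto u atTop (nhds v) := tendsto_pi_nhds.mpr hv
  -- properties of v
  have hvδ : ∀ i, δ ≤ v i := fun i => ge_of_tendsto' (hv i) (fun t => hδu t i)
  have hvpos : ∀ i, 0 < v i := fun i => lt_of_lt_of_le hδpos (hvδ i)
  have hvne : v ≠ 0 := by
    intro h0
    have := hvpos ⟨0,hn⟩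
    rw [h0] at this
    exact lt_irrefl _ this
  have hSv : S v = 1 := by
    have h1 : Tendsto (fun t => S (u t)) atTop (nhds (S v)) :=
      tendsto_finset_sum _ (fun i _ => hv i)
    have h2 : Tendsto (fun t => S (u t)) atTop (nhds 1) := by
      have : (fun t => S (u t)) = fun _ => (1:ℝ) := funext hSu
      rw [this]
      exact tendsto_const_nhds
    exact tendsto_nhds_unique h1 h2
  set lam := S (B *ᵥ v) with hlamdef
  have hBv_t : ∀ i, Tendsto (fun t => (B *ᵥ u t) i) atTop (nhds ((B *ᵥ v) i)) := by
    intro i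
    have : ∀ t, (B *ᵥ u t) i = ∑ j, B i j * u t j := fun t => rfl
    simp only [this, mulVec_apply]
    exact tendsto_finset_sum _ (fun j _ => (hv j).const_mul (B i j))
  have hst_t : Tendsto (fun t => S (B *ᵥ u t)) atTop (nhds lam) :=
    tendsto_finset_sum _ (fun i _ => hBv_t i)
  have hgap0 : Tendsto (fun t => Mt t - mt t) atTop (nhds 0) := by
    apply squeeze_zero hgap_nn hgap_geom
    have := (tendsto_pow_atTop_nhds_zero_of_lt_one hθ0 hθ1).mul_const (Mt 0 - mt 0)
    simpa using this
  have heig : ∀ i, (B *ᵥ v) i = lam * v i := by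
    intro i
    have ht1 : Tendsto (fun t => (B *ᵥ u t) i - S (B *ᵥ u t) * u t i) atTop
        (nhds ((B *ᵥ v) i - lam * v i)) := (hBv_t i).sub (hst_t.mul (hv i))
    have ht2 : Tendsto (fun t => (B *ᵥ u t) i - S (B *ᵥ u t) * u t i) atTop (nhds 0) := by
      apply squeeze_zero_norm (fun t => habs t i) hgap0
    have := tendsto_nhds_unique ht1 ht2
    linarith [this]
  have heig' : B *ᵥ v = lam • v := by
    funext i
    rw [heig i]
    rfl
  have hlampos : 0 < lam := S_pos_of_pos hn (mulVec_pos hB (fun i => (hvpos i).le) hvne)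
  refine ⟨v, lam, hvpos, hSv, heig', hlampos, ?_⟩
  rw [← tendsto_add_atTop_iff_nat 1]
  exact huv

end Engine

section Engine2
variable {B : Matrix (Fin n) (Fin n) ℝ}

lemma engine (hn : 0 < n) (hB : ∀ i j, 0 < B i j) :
    ∃ v : Fin n → ℝ, ∃ lam : ℝ, (∀ i, 0 < v i) ∧ S v = 1 ∧ B *ᵥ v = lam • v ∧ 0 < lam ∧
      ∀ p : Fin n → ℝ, (∀ i, 0 ≤ p i) → p ≠ 0 →
        Tendsto (fun t => (S ((B ^ t) *ᵥ p))⁻¹ • ((B ^ t) *ᵥ p)) atTop (nhds v) := by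
  obtain ⟨v, lam, hvpos, hSv, hveig, hlampos, -⟩ :=
    engine1 hn hB (p := fun _ => 1) (fun i => zero_le_one)
      (fun h0 => one_ne_zero (congrFun h0 ⟨0, hn⟩))
  refine ⟨v, lam, hvpos, hSv, hveig, hlampos, fun p hp hpne => ?_⟩
  obtain ⟨v', lam', hv'pos, hSv', hv'eig, hlam'pos, htend'⟩ := engine1 hn hB hp hpne
  obtain ⟨-, t, htpos, hvt⟩ :=
    compare hn hB hvpos hveig (fun i => (hv'pos i).le)
      (fun h0 => (lt_irrefl (0:ℝ)) (by rw [h0] at hv'pos; simpa using hv'pos ⟨0, hn⟩)) hv'eig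
  have ht1 : t = 1 := by
    have hS : S v' = t * S v := by
      rw [hvt]
      simp [S, Finset.mul_sum]
    rw [hSv, hSv', mul_one] at hS
    exact hS.symm
  have : v' = v := by rw [hvt, ht1, one_smul]
  rw [← this]
  exact htend'

end Engine2

section Spectra

lemma mem_spectrum_of_eig (A : Matrix (Fin n) (Fin n) ℝ) {v : Fin n → ℝ} {c : ℝ}
    (hv : v ≠ 0) (h : A *ᵥ v = c • v) : c ∈ spectrum ℝ A := by
  rw [spectrum.mem_iff]
  intro hunit
  rw [Matrix.isUnit_iff_isUnit_det] at hunit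
  have halg : (algebraMap ℝ (Matrix (Fin n) (Fin n) ℝ)) c *ᵥ v = c • v := by
    ext i
    simp [Matrix.algebraMap_eq_diagonal, Matrix.mulVec_diagonal]
  have hdet : ((algebraMap ℝ (Matrix (Fin n) (Fin n) ℝ)) c - A).det = 0 := by
    rw [← Matrix.exists_mulVec_eq_zero_iff]
    exact ⟨v, hv, by rw [Matrix.sub_mulVec, halg, h, sub_self]⟩
  rw [hdet] at hunit
  exact zero_ne_one (isUnit_zero_iff.mp hunit)

lemma exists_eigvec_of_mem_spectrum {M : Matrix (Fin n) (Fin n) ℂ} {μ : ℂ}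
    (h : μ ∈ spectrum ℂ M) : ∃ w : Fin n → ℂ, w ≠ 0 ∧ M *ᵥ w = μ • w := by
  rw [spectrum.mem_iff, Matrix.isUnit_iff_isUnit_det, isUnit_iff_ne_zero, not_not,
    ← Matrix.exists_mulVec_eq_zero_iff] at h
  obtain ⟨w, hw, h⟩ := h
  refine ⟨w, hw, ?_⟩
  rw [Matrix.sub_mulVec] at h
  have h2 : (algebraMap ℂ (Matrix (Fin n) (Fin n) ℂ)) μ *ᵥ w = μ • w := by
    ext i
    simp [Matrix.algebraMap_eq_diagonal, Matrix.mulVec_diagonal]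
  rw [h2] at h
  have := sub_eq_zero.mp h
  exact this.symm

lemma map_pow_ofReal (A : Matrix (Fin n) (Fin n) ℝ) (k : ℕ) :
    (A.map Complex.ofReal) ^ k = (A ^ k).map Complex.ofReal := by
  have : A.map Complex.ofReal = (Complex.ofRealHom.mapMatrix : Matrix (Fin n) (Fin n) ℝ →+* _) A := rfl
  rw [this, ← map_pow]; rfl

lemma mulVec_pow_eig_C {A : Matrix (Fin n) (Fin n) ℂ} {v : Fin n → ℂ} {c : ℂ}
    (h : A *ᵥ v = c • v) (m : ℕ) : (A ^ m) *ᵥ v = (c ^ m) • v := by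
  induction m with
  | zero => simp
  | succ m ih =>
    rw [pow_succ, pow_succ, ← Matrix.mulVec_mulVec, h, Matrix.mulVec_smul, ih, smul_smul, mul_comm]

lemma re_eq_abs_imp {u : ℂ} (h : u.re = ‖u‖) : u = ((‖u‖ : ℝ) : ℂ) := by
  have him : u.im = 0 := by
    have h2 : (‖u‖) ^ 2 = u.re ^ 2 + u.im ^ 2 := by
      rw [Complex.sq_norm, Complex.normSq_apply]; ring
    rw [← h] at h2
    nlinarith [sq_nonneg u.im]
  apply Complex.ext
  · simp [h]
  · simp [him]

/-- iterate a one-step pointwise inequality -/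
lemma iter_ge {B : Matrix (Fin n) (Fin n) ℝ} (hBnn : ∀ i j, 0 ≤ B i j)
    {g : Fin n → ℝ} (hg : ∀ i, 0 ≤ g i) {a : ℝ} (ha : 0 ≤ a)
    (hstep : ∀ i, a * g i ≤ (B *ᵥ g) i) :
    ∀ m i, a ^ m * g i ≤ ((B ^ m) *ᵥ g) i := by
  intro m
  induction m with
  | zero => intro i; simp [Matrix.one_mulVec]
  | succ m ih =>
    intro i
    have h1 : a ^ (m+1) * g i = a * (a ^ m * g i) := by ring
    have h2 : a * (a ^ m * g i) ≤ a * (((B ^ m) *ᵥ g) i) :=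
      mul_le_mul_of_nonneg_left (ih i) ha
    have h3 : a * (((B ^ m) *ᵥ g) i) = ((B ^ m) *ᵥ (a • g)) i := by
      rw [Matrix.mulVec_smul]; simp
    have h4 : ((B ^ m) *ᵥ (a • g)) i ≤ ((B ^ m) *ᵥ (B *ᵥ g)) i := by
      apply mulVec_mono (pow_nonneg hBnn m)
      intro j
      simpa using hstep j
    have h5 : ((B ^ m) *ᵥ (B *ᵥ g)) i = ((B ^ (m+1)) *ᵥ g) i := by
      rw [Matrix.mulVec_mulVec, ← pow_succ]
    linarith
end Spectra

lemma S_def (u : Fin n → ℝ) : S u = ∑ i, u i := rfl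

end NPI

open NPI

/-- Normalized power iteration for a nonnegative primitive matrix `A`: starting
from any nonnegative nonzero vector `x⁽⁰⁾`, the sequence
`x⁽ᵏ⁾ = Aᵏ x⁽⁰⁾ / ‖Aᵏ x⁽⁰⁾‖₁` converges to the unique vector `x*` that is an
eigenvector of `A` for its dominant eigenvalue, has all components nonnegative,
and has `‖x*‖₁ = 1`; in particular `x*` is nonnegative and nonzero. -/
theorem normalized_power_iteration_converges
    (n : ℕ)
    (A : Matrix (Fin n) (Fin n) ℝ)
    (hA : ∀ i j, 0 ≤ A i j)
    (hprim : ∃ k : ℕ, 1 ≤ k ∧ ∀ i j, 0 < (A ^ k) i j)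
    (x₀ : Fin n → ℝ)
    (hx₀ : ∀ i, 0 ≤ x₀ i)
    (hx₀ne : x₀ ≠ 0)
    (x : ℕ → Fin n → ℝ)
    (hx : ∀ k, x k = (∑ i, |((A ^ k).mulVec x₀) i|)⁻¹ • (A ^ k).mulVec x₀) :
    ∃ c : ℝ, c ∈ spectrum ℝ A ∧
      (∀ μ : ℂ, μ ∈ spectrum ℂ (A.map Complex.ofReal) → μ ≠ (c : ℂ) →
        ‖μ‖ < c) ∧
      ∃ xstar : Fin n → ℝ,
        (A.mulVec xstar = c • xstar ∧ (∀ i, 0 ≤ xstar i) ∧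
          ∑ i, |xstar i| = 1) ∧
        (∀ y : Fin n → ℝ,
          (A.mulVec y = c • y ∧ (∀ i, 0 ≤ y i) ∧ ∑ i, |y i| = 1) →
            y = xstar) ∧
        Tendsto x atTop (nhds xstar) ∧
        xstar ≠ 0 := by
  obtain ⟨k, hk1, hkpos⟩ := hprim
  have hn : 0 < n := by
    rcases Nat.eq_zero_or_pos n with h0 | hn
    · exfalso
      apply hx₀ne
      funext i
      exact absurd i.isLt (by omega)
    · exact hn
  have i0 : Fin n := ⟨0, hn⟩
  set B := A ^ k with hBdef
  have hB : ∀ i j, 0 < B i j := hkpos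
  have hBnn : ∀ i j, 0 ≤ B i j := fun i j => (hB i j).le
  obtain ⟨v, lam, hvpos, hSv, hveig, hlampos, htend⟩ := engine hn hB
  have hvnn : ∀ i, 0 ≤ v i := fun i => (hvpos i).le
  have hvne : v ≠ 0 := by
    intro h0
    have := hvpos ⟨0, hn⟩
    rw [h0] at this
    exact lt_irrefl _ this
  -- A has no zero row
  have hrowA : ∀ i, ∃ j, 0 < A i j := by
    intro i
    by_contra h
    push_neg at h
    have hrow0 : ∀ j, A i j = 0 := fun j => le_antisymm (h j) (hA i j)
    obtain ⟨k', rfl⟩ : ∃ k', k = k' + 1 := ⟨k - 1, (Nat.succ_pred_eq_of_pos hk1).symm⟩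
    have : (A ^ (k' + 1)) i i = 0 := by
      rw [pow_succ', Matrix.mul_apply]
      apply Finset.sum_eq_zero
      intro l _
      rw [hrow0 l, zero_mul]
    exact absurd this (ne_of_gt (hkpos i i))
  have hApos : ∀ {q : Fin n → ℝ}, (∀ i, 0 < q i) → ∀ i, 0 < (A *ᵥ q) i := by
    intro q hq i
    obtain ⟨j, hj⟩ := hrowA i
    rw [NPI.mulVec_apply]
    calc (0:ℝ) < A i j * q j := mul_pos hj (hq j)
      _ ≤ ∑ l, A i l * q l :=
        Finset.single_le_sum (fun l _ => mul_nonneg (hA i l) (hq l).le) (Finset.mem_univ j)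
  have hArpos : ∀ (r : ℕ) {q : Fin n → ℝ}, (∀ i, 0 < q i) → ∀ i, 0 < ((A ^ r) *ᵥ q) i := by
    intro r
    induction r with
    | zero => intro q hq i; rw [pow_zero, Matrix.one_mulVec]; exact hq i
    | succ r ih =>
      intro q hq i
      rw [pow_succ', ← Matrix.mulVec_mulVec]
      exact hApos (ih hq) i
  -- iterates of x₀ are nonzero
  have hynn : ∀ m, ∀ i, 0 ≤ ((A ^ m) *ᵥ x₀) i := fun m => mulVec_nonneg (pow_nonneg hA m) hx₀
  have hBx₀pos : ∀ i, 0 < (B *ᵥ x₀) i := mulVec_pos hB hx₀ hx₀ne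
  have hyne : ∀ m, (A ^ m) *ᵥ x₀ ≠ 0 := by
    intro m h0
    have e1 : (A ^ (m + k)) *ᵥ x₀ = (A ^ m) *ᵥ (B *ᵥ x₀) := by
      rw [hBdef, Matrix.mulVec_mulVec, ← pow_add]
    have e2 : (A ^ (m + k)) *ᵥ x₀ = B *ᵥ ((A ^ m) *ᵥ x₀) := by
      rw [hBdef, Matrix.mulVec_mulVec, ← pow_add, add_comm]
    have hpos := hArpos m hBx₀pos ⟨0, hn⟩
    rw [← e1, e2, h0, Matrix.mulVec_zero] at hpos
    exact lt_irrefl _ hpos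
  -- the dominant eigenvalue c for A
  have hqeig : B *ᵥ (A *ᵥ v) = lam • (A *ᵥ v) := by
    rw [Matrix.mulVec_mulVec, hBdef, ← pow_succ, pow_succ', ← Matrix.mulVec_mulVec, ← hBdef,
      hveig, Matrix.mulVec_smul]
  have hqnn : ∀ i, 0 ≤ (A *ᵥ v) i := mulVec_nonneg hA hvnn
  have hqne : A *ᵥ v ≠ 0 := by
    intro h0
    obtain ⟨k', rfl⟩ : ∃ k', k = k' + 1 := ⟨k - 1, (Nat.succ_pred_eq_of_pos hk1).symm⟩
    have e : B *ᵥ v = (A ^ k') *ᵥ (A *ᵥ v) := by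
      rw [Matrix.mulVec_mulVec, hBdef, ← pow_succ]
    rw [h0, Matrix.mulVec_zero, hveig] at e
    have := congrFun e ⟨0, hn⟩
    simp only [Pi.smul_apply, smul_eq_mul, Pi.zero_apply] at this
    nlinarith [hvpos ⟨0, hn⟩, hlampos]
  obtain ⟨-, c, hcpos, hceig⟩ := compare hn hB hvpos hveig hqnn hqne hqeig
  -- hceig : A *ᵥ v = c • v
  have hck : c ^ k = lam := by
    have h1 := mulVec_pow_eig hceig k
    rw [← hBdef, hveig] at h1
    have := congrFun h1 ⟨0, hn⟩
    simp only [Pi.smul_apply, smul_eq_mul] at this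
    exact (mul_right_cancel₀ (ne_of_gt (hvpos ⟨0, hn⟩)) this).symm
  have hSv_abs : ∑ i, |v i| = 1 := by
    rw [← hSv, S_def]
    exact Finset.sum_congr rfl fun i _ => abs_of_nonneg (hvnn i)
  -- dominance
  have hdom : ∀ μ : ℂ, μ ∈ spectrum ℂ (A.map Complex.ofReal) → μ ≠ (c : ℂ) →
      ‖μ‖ < c := by
    intro μ hμ hμne
    obtain ⟨w, hwne, hweig⟩ := exists_eigvec_of_mem_spectrum hμ
    set aw := fun i => ‖w i‖ with hawdef
    have hawnn : ∀ i, 0 ≤ aw i := fun i => norm_nonneg _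
    have hawne : aw ≠ 0 := by
      intro h0
      apply hwne
      funext i
      have := congrFun h0 i
      simpa [hawdef, _root_.map_eq_zero] using this
    have habs_step : ∀ i, ‖μ‖ * aw i ≤ (A *ᵥ aw) i := by
      intro i
      have h1 : ((A.map Complex.ofReal) *ᵥ w) i = μ * w i := by
        rw [hweig]; rfl
      have h2 : ((A.map Complex.ofReal) *ᵥ w) i = ∑ j, (A i j : ℂ) * w j := rfl
      calc ‖μ‖ * aw i = ‖μ * w i‖ := by rw [norm_mul]
        _ = ‖∑ j, (A i j : ℂ) * w j‖ := by rw [← h1, h2]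
        _ ≤ ∑ j, ‖(A i j : ℂ) * w j‖ := norm_sum_le _ _
        _ = ∑ j, A i j * aw j := by
            apply Finset.sum_congr rfl
            intro j _
            rw [norm_mul, Complex.norm_real, Real.norm_eq_abs, abs_of_nonneg (hA i j)]
        _ = (A *ᵥ aw) i := (NPI.mulVec_apply A aw i).symm
    have hiter := iter_ge hA hawnn (norm_nonneg _) habs_step
    have hk_ineq : ∀ i, ‖μ‖ ^ k * aw i ≤ (B *ᵥ aw) i := fun i => hiter k i
    -- sup ratio with v
    obtain ⟨i₁, -, hi₁⟩ := Finset.exists_mem_eq_sup' (hne hn) (fun i => aw i / v i)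
    have hsle : ∀ i, aw i ≤ (aw i₁ / v i₁) * v i := by
      intro i
      have h0 : aw i / v i ≤ aw i₁ / v i₁ := by
        rw [← hi₁]
        exact Finset.le_sup' (fun i => aw i / v i) (Finset.mem_univ i)
      rw [div_le_div_iff₀ (hvpos i) (hvpos i₁)] at h0
      rw [div_mul_eq_mul_div, le_div_iff₀ (hvpos i₁)]
      linarith
    have hawi₁pos : 0 < aw i₁ := by
      obtain ⟨j, hj⟩ : ∃ j, 0 < aw j := by
        by_contra hcon
        push_neg at hcon
        exact hawne (funext fun j => le_antisymm (hcon j) (hawnn j))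
      by_contra hcon
      push_neg at hcon
      have hzero : aw i₁ = 0 := le_antisymm hcon (hawnn i₁)
      have h5 := hsle j
      rw [hzero, zero_div, zero_mul] at h5
      exact absurd h5 (not_le.mpr hj)
    set s := aw i₁ / v i₁ with hsdef
    have hspos : 0 < s := div_pos hawi₁pos (hvpos i₁)
    have hBaw_le : ∀ i, (B *ᵥ aw) i ≤ s * lam * v i := by
      intro i
      have h1 : (B *ᵥ aw) i ≤ (B *ᵥ (s • v)) i := mulVec_mono hBnn hsle i
      have h2 : B *ᵥ (s • v) = (s * lam) • v := by
        rw [Matrix.mulVec_smul, hveig, smul_smul]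
      rw [h2] at h1
      simpa using h1
    have hmuk_le : ‖μ‖ ^ k ≤ lam := by
      have h1 := (hk_ineq i₁).trans (hBaw_le i₁)
      have h2 : s * v i₁ = aw i₁ := div_mul_cancel₀ _ (ne_of_gt (hvpos i₁))
      have h3 : s * lam * v i₁ = lam * aw i₁ := by rw [mul_comm s lam, mul_assoc, h2]
      rw [h3] at h1
      exact le_of_mul_le_mul_right h1 hawi₁pos
    have hmu_le : ‖μ‖ ≤ c := by
      by_contra hcon
      push_neg at hcon
      have : c ^ k < ‖μ‖ ^ k :=
        pow_lt_pow_left₀ hcon hcpos.le (by omega)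
      rw [hck] at this
      exact absurd hmuk_le (not_le.mpr this)
    rcases hmu_le.lt_or_eq with hlt | heq
    · exact hlt
    · exfalso
      -- equality case |μ| = c
      have hBaw_ge : ∀ i, lam * aw i ≤ (B *ᵥ aw) i := by
        intro i
        have := hk_ineq i
        rw [heq, hck] at this
        exact this
      set z := (B *ᵥ aw) - lam • aw with hzdef
      have hznn : ∀ i, 0 ≤ z i := fun i => by
        simp only [hzdef, Pi.sub_apply, Pi.smul_apply, smul_eq_mul]
        linarith [hBaw_ge i]
      by_cases hz0 : z = 0
      · -- B aw = lam aw ; equality in triangle inequality forces alignment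
        have hBaw : B *ᵥ aw = lam • aw := by
          have := sub_eq_zero.mp (hzdef ▸ hz0)
          exact this
        obtain ⟨-, t', ht'pos, hawt⟩ := compare hn hB hvpos hveig hawnn hawne hBaw
        have hawpos : ∀ i, 0 < aw i := by
          intro i
          rw [hawt]
          simp only [Pi.smul_apply, smul_eq_mul]
          exact mul_pos ht'pos (hvpos i)
        -- complex eigen equation for B
        have hBc : (B.map Complex.ofReal) *ᵥ w = (μ ^ k) • w := by
          rw [← map_pow_ofReal]
          exact mulVec_pow_eig_C hweig k
        -- fix row i0'
        have i0' : Fin n := ⟨0, hn⟩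
        set ζ := ∑ j, (B i0' j : ℂ) * w j with hζdef
        have hζ_eq : ζ = μ ^ k * w i0' := by
          have h1 : ((B.map Complex.ofReal) *ᵥ w) i0' = ∑ j, (B i0' j : ℂ) * w j := rfl
          rw [hζdef, ← h1, hBc]
          rfl
        have habsζ : ‖ζ‖ = ∑ j, B i0' j * aw j := by
          rw [hζ_eq, norm_mul, norm_pow]
          have h2 : ‖μ‖ ^ k * aw i0' = lam * aw i0' := by rw [heq, hck]
          rw [h2]
          have h3 := congrFun hBaw i0'
          simp only [Pi.smul_apply, smul_eq_mul] at h3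
          rw [← h3]
          exact NPI.mulVec_apply B aw i0'
        have hζabs_pos : 0 < ‖ζ‖ := by
          rw [habsζ]
          exact Finset.sum_pos (fun j _ => mul_pos (hB i0' j) (hawpos j)) (hne hn)
        have hζne : ζ ≠ 0 := by
          intro h0
          rw [h0, norm_zero] at hζabs_pos
          exact lt_irrefl _ hζabs_pos
        set e : ℂ := ζ / (‖ζ‖ : ℂ) with hedef
        have habse : ‖e‖ = 1 := by
          rw [hedef, norm_div, Complex.norm_real, Real.norm_eq_abs, abs_of_pos hζabs_pos, div_self (ne_of_gt hζabs_pos)]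
        have hene : e ≠ 0 := by
          intro h0
          rw [h0, norm_zero] at habse
          exact zero_ne_one habse
        -- termwise equality
        set f : Fin n → ℂ := fun j => (starRingEnd ℂ) e * ((B i0' j : ℂ) * w j) with hfdef
        have hsumf : ∑ j, f j = ((‖ζ‖ : ℝ) : ℂ) := by
          rw [hfdef]
          rw [← Finset.mul_sum, ← hζdef, hedef]
          rw [_root_.map_div₀ (starRingEnd ℂ)]
          have : (starRingEnd ℂ) ((‖ζ‖ : ℝ) : ℂ) = ((‖ζ‖ : ℝ) : ℂ) :=
            Complex.conj_ofReal _
          rw [this, div_mul_eq_mul_div, mul_comm, Complex.mul_conj]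
          rw [Complex.normSq_eq_norm_sq]
          push_cast
          rw [pow_two, mul_div_assoc, div_self (by exact_mod_cast ne_of_gt hζabs_pos), mul_one]
        have habsf : ∀ j, ‖f j‖ = B i0' j * aw j := by
          intro j
          rw [hfdef]
          simp only
          rw [norm_mul, norm_mul, Complex.norm_conj, habse, one_mul, Complex.norm_real, Real.norm_eq_abs,
            abs_of_nonneg (hBnn i0' j)]
        have hre_le : ∀ j, (f j).re ≤ B i0' j * aw j := by
          intro j
          rw [← habsf j]
          exact Complex.re_le_norm _
        have hsum_re : ∑ j, (f j).re = ∑ j, B i0' j * aw j := by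
          have h1 : (∑ j, f j).re = ∑ j, (f j).re := Complex.re_sum _ _
          rw [← h1, hsumf]
          rw [Complex.ofReal_re, habsζ]
        have hre_eq : ∀ j, (f j).re = B i0' j * aw j := by
          intro j
          by_contra hcon
          have hlt : (f j).re < B i0' j * aw j := lt_of_le_of_ne (hre_le j) hcon
          have : ∑ j, (f j).re < ∑ j, B i0' j * aw j :=
            Finset.sum_lt_sum (fun l _ => hre_le l) ⟨j, Finset.mem_univ j, hlt⟩
          rw [hsum_re] at this
          exact lt_irrefl _ this
        have hf_real : ∀ j, f j = ((B i0' j * aw j : ℝ) : ℂ) := by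
          intro j
          have h1 : (f j).re = ‖f j‖ := by rw [habsf j, hre_eq j]
          have h2 := re_eq_abs_imp h1
          rw [habsf j] at h2
          exact h2
        -- w j = e * aw j
        have hwj : ∀ j, w j = e * ((aw j : ℝ) : ℂ) := by
          intro j
          have h1 := hf_real j
          rw [hfdef] at h1
          simp only at h1
          have h2 : e * (starRingEnd ℂ) e = 1 := by
            rw [Complex.mul_conj, Complex.normSq_eq_norm_sq, habse]
            norm_num
          have hBne : (B i0' j : ℂ) ≠ 0 := by
            exact_mod_cast ne_of_gt (hB i0' j)
          have h3 : (B i0' j : ℂ) * w j = e * ((B i0' j : ℂ) * ((aw j : ℝ) : ℂ)) := by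
            have h4 := congrArg (fun zz => e * zz) h1
            rw [← mul_assoc, h2, one_mul] at h4
            rw [h4]
            push_cast
            ring
          apply mul_left_cancel₀ hBne
          rw [h3]
          ring
        -- plug into eigen equation for A
        have hμreal : ∀ j, ((A *ᵥ aw) j : ℂ) = μ * ((aw j : ℝ) : ℂ) := by
          intro j
          have h1 : ((A.map Complex.ofReal) *ᵥ w) j = μ * w j := by rw [hweig]; rfl
          have h2 : ((A.map Complex.ofReal) *ᵥ w) j = ∑ l, (A j l : ℂ) * w l := rfl
          have h3 : ∑ l, (A j l : ℂ) * w l = e * ∑ l, (A j l : ℂ) * ((aw l : ℝ) : ℂ) := by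
            rw [Finset.mul_sum]
            apply Finset.sum_congr rfl
            intro l _
            rw [hwj l]
            ring
          have h4 : ∑ l, (A j l : ℂ) * ((aw l : ℝ) : ℂ) = (((A *ᵥ aw) j : ℝ) : ℂ) := by
            rw [NPI.mulVec_apply]
            push_cast
            rfl
          have h5 : μ * w j = μ * (e * ((aw j : ℝ) : ℂ)) := by rw [hwj j]
          have h6 : e * (((A *ᵥ aw) j : ℝ) : ℂ) = e * (μ * ((aw j : ℝ) : ℂ)) := by
            rw [← h4, ← h3, ← h2, h1, h5]
            ring
          exact mul_left_cancel₀ hene h6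
        -- μ is real & nonneg
        have hμim : μ.im = 0 := by
          have h1 := hμreal i0'
          have h2 : (μ * ((aw i0' : ℝ) : ℂ)).im = 0 := by
            rw [← h1]
            exact Complex.ofReal_im _
          rw [Complex.mul_im, Complex.ofReal_im, Complex.ofReal_re, mul_zero, zero_add] at h2
          rcases mul_eq_zero.mp h2 with h | h
          · exact h
          · exact absurd h (ne_of_gt (hawpos i0'))
        have hμre : μ.re * aw i0' = (A *ᵥ aw) i0' := by
          have h1 := hμreal i0'
          have h2 := congrArg Complex.re h1
          simp only [Complex.ofReal_re, Complex.mul_re, Complex.ofReal_im, hμim] at h2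
          linarith [h2]
        have hμre_nn : 0 ≤ μ.re := by
          have h1 : 0 ≤ (A *ᵥ aw) i0' := mulVec_nonneg hA hawnn i0'
          rw [← hμre] at h1
          by_contra hcon
          push_neg at hcon
          nlinarith [hawpos i0']
        have hμc : μ = (c : ℂ) := by
          have h1 : μ = ((μ.re : ℝ) : ℂ) := by
            apply Complex.ext
            · exact (Complex.ofReal_re _).symm
            · rw [hμim]; exact (Complex.ofReal_im _).symm
          have h2 : ‖μ‖ = μ.re := by
            conv_lhs => rw [h1]
            rw [Complex.norm_real, Real.norm_eq_abs, abs_of_nonneg hμre_nn]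
          rw [h1, ← h2, heq]
        exact hμne hμc
      · -- z ≠ 0 : growth contradiction
        have hu'pos : ∀ i, 0 < (B *ᵥ aw) i := mulVec_pos hB hawnn hawne
        have hBz_pos : ∀ i, 0 < (B *ᵥ z) i := mulVec_pos hB hznn hz0
        obtain ⟨i₂, -, hi₂⟩ := Finset.exists_mem_eq_inf'
          (hne hn) (fun i => (B *ᵥ z) i / (B *ᵥ aw) i)
        set ε := (B *ᵥ z) i₂ / (B *ᵥ aw) i₂ with hεdef
        have hεpos : 0 < ε := div_pos (hBz_pos i₂) (hu'pos i₂)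
        have hεle : ∀ i, ε * (B *ᵥ aw) i ≤ (B *ᵥ z) i := by
          intro i
          have h0 : ε ≤ (B *ᵥ z) i / (B *ᵥ aw) i := by
            rw [← hi₂]
            exact Finset.inf'_le _ (Finset.mem_univ i)
          rw [le_div_iff₀ (hu'pos i)] at h0
          linarith
        have hgrow : ∀ i, (lam + ε) * (B *ᵥ aw) i ≤ (B *ᵥ (B *ᵥ aw)) i := by
          intro i
          have hsum : B *ᵥ aw = lam • aw + z := by
            rw [hzdef]
            funext j
            simp
          have e : B *ᵥ (B *ᵥ aw) = lam • (B *ᵥ aw) + B *ᵥ z := by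
            calc B *ᵥ (B *ᵥ aw) = B *ᵥ (lam • aw + z) := by rw [← hsum]
              _ = lam • (B *ᵥ aw) + B *ᵥ z := by
                  rw [Matrix.mulVec_add, Matrix.mulVec_smul]
          rw [e]
          simp only [Pi.add_apply, Pi.smul_apply, smul_eq_mul]
          linarith [hεle i]
        have hiter2 := iter_ge hBnn (fun i => (hu'pos i).le)
          (by positivity : (0:ℝ) ≤ lam + ε) hgrow
        -- upper comparison with v
        obtain ⟨i₃, -, hi₃⟩ := Finset.exists_mem_eq_sup' (hne hn)
          (fun i => (B *ᵥ aw) i / v i)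
        set s' := (B *ᵥ aw) i₃ / v i₃ with hs'def
        have hs'pos : 0 < s' := div_pos (hu'pos i₃) (hvpos i₃)
        have hs'le : ∀ i, (B *ᵥ aw) i ≤ s' * v i := by
          intro i
          have h0 : (B *ᵥ aw) i / v i ≤ s' := by
            rw [← hi₃]
            exact Finset.le_sup' (fun i => (B *ᵥ aw) i / v i) (Finset.mem_univ i)
          rw [div_le_iff₀ (hvpos i)] at h0
          linarith
        have hup : ∀ m i, ((B ^ m) *ᵥ (B *ᵥ aw)) i ≤ s' * lam ^ m * v i := by
          intro m i
          have h1 : ((B ^ m) *ᵥ (B *ᵥ aw)) i ≤ ((B ^ m) *ᵥ (s' • v)) i :=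
            mulVec_mono (pow_nonneg hBnn m) hs'le i
          have h2 : (B ^ m) *ᵥ (s' • v) = (s' * lam ^ m) • v := by
            rw [Matrix.mulVec_smul, mulVec_pow_eig hveig m, smul_smul]
          rw [h2] at h1
          simpa using h1
        have : lam + ε ≤ lam := by
          apply le_of_pow_ratio hlampos (by positivity : (0:ℝ) < lam + ε)
            (hu'pos ⟨0,hn⟩) (mul_pos hs'pos (hvpos ⟨0,hn⟩))
          intro m
          calc (B *ᵥ aw) ⟨0,hn⟩ * (lam + ε) ^ m
              = (lam + ε) ^ m * (B *ᵥ aw) ⟨0,hn⟩ := mul_comm _ _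
            _ ≤ ((B ^ m) *ᵥ (B *ᵥ aw)) ⟨0,hn⟩ := hiter2 m ⟨0,hn⟩
            _ ≤ s' * lam ^ m * v ⟨0,hn⟩ := hup m ⟨0,hn⟩
            _ = s' * v ⟨0,hn⟩ * lam ^ m := by ring
        linarith
  -- uniqueness of the normalized nonnegative eigenvector
  have huniq : ∀ y : Fin n → ℝ,
      (A.mulVec y = c • y ∧ (∀ i, 0 ≤ y i) ∧ ∑ i, |y i| = 1) → y = v := by
    rintro y ⟨hyeig, hynn', hynorm⟩
    have hyne' : y ≠ 0 := by
      intro h0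
      rw [h0] at hynorm
      simp at hynorm
    have hyBeig : B *ᵥ y = lam • y := by
      have := mulVec_pow_eig hyeig k
      rw [← hBdef, hck] at this
      exact this
    obtain ⟨-, t'', ht''pos, hyt⟩ := compare hn hB hvpos hveig hynn' hyne' hyBeig
    have hSy : ∑ i, |y i| = t'' := by
      rw [show ∑ i, |y i| = ∑ i, y i from
        Finset.sum_congr rfl fun i _ => abs_of_nonneg (hynn' i)]
      rw [hyt]
      simp only [Pi.smul_apply, smul_eq_mul, ← Finset.mul_sum]
      rw [show ∑ i, v i = S v from (S_def v).symm, hSv, mul_one]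
    rw [hynorm] at hSy
    rw [hyt, ← hSy, one_smul]
  -- convergence of the full sequence
  have hx_eq : ∀ m, x m = (S ((A ^ m) *ᵥ x₀))⁻¹ • ((A ^ m) *ᵥ x₀) := by
    intro m
    rw [hx m]
    congr 2
    rw [S_def]
    exact Finset.sum_congr rfl fun i _ => abs_of_nonneg (hynn m i)
  have hconv : Tendsto x atTop (nhds v) := by
    rw [Metric.tendsto_atTop]
    intro ε hε
    have hk0 : 0 < k := hk1
    have hres : ∀ r : Fin k, ∃ N, ∀ t ≥ N, dist (x (k * t + r)) v < ε := by
      intro r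
      have hpnn : ∀ i, 0 ≤ ((A ^ (r:ℕ)) *ᵥ x₀) i := hynn (r:ℕ)
      have hpne : ((A ^ (r:ℕ)) *ᵥ x₀) ≠ 0 := hyne (r:ℕ)
      have h := htend ((A ^ (r:ℕ)) *ᵥ x₀) hpnn hpne
      rw [Metric.tendsto_atTop] at h
      obtain ⟨N, hN⟩ := h ε hε
      refine ⟨N, fun t ht => ?_⟩
      have e : (A ^ (k * t + (r:ℕ))) *ᵥ x₀ = (B ^ t) *ᵥ ((A ^ (r:ℕ)) *ᵥ x₀) := by
        rw [Matrix.mulVec_mulVec, hBdef, ← pow_mul, ← pow_add]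
      have e2 : x (k * t + (r:ℕ)) =
          (S ((B ^ t) *ᵥ ((A ^ (r:ℕ)) *ᵥ x₀)))⁻¹ • ((B ^ t) *ᵥ ((A ^ (r:ℕ)) *ᵥ x₀)) := by
        rw [hx_eq, e]
      rw [e2]
      exact hN t ht
    choose NN hNN using hres
    haveI : Nonempty (Fin k) := ⟨⟨0, hk0⟩⟩
    refine ⟨k * (Finset.univ.sup NN + 1), fun m hm => ?_⟩
    have hr : m % k < k := Nat.mod_lt m hk0
    set r : Fin k := ⟨m % k, hr⟩ with hrdef
    have hmtr : k * (m / k) + (r:ℕ) = m := Nat.div_add_mod m k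
    have htN : NN r ≤ m / k := by
      have h1 : Finset.univ.sup NN + 1 ≤ m / k := by
        rw [Nat.le_div_iff_mul_le hk0]
        calc (Finset.univ.sup NN + 1) * k = k * (Finset.univ.sup NN + 1) := mul_comm _ _
          _ ≤ m := hm
      calc NN r ≤ Finset.univ.sup NN := Finset.le_sup (Finset.mem_univ r)
        _ ≤ m / k := by omega
    calc dist (x m) v = dist (x (k * (m / k) + (r:ℕ))) v := by rw [hmtr]
      _ < ε := hNN r (m / k) htN
  refine ⟨c, mem_spectrum_of_eig A hvne hceig, hdom, v,
    ⟨hceig, hvnn, hSv_abs⟩, huniq, ?_, hvne⟩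
  exact hconv
end
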